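/- arXiv:2112.13825 — 11 statements merged into one kernel-verified Lean document; each statement's English description precedes it below -/
import Mathlib

section
/- Let C be a finite closure algebra (or finite sub-closure-algebra of the powerset of a topological space) generated as a Boolean algebra by its closed elements. If U and V are distinct atoms of C, then cl(U) ≠ cl(V). -/
/-- In a finite closure algebra generated as a Boolean algebra by its closed
elements, distinct atoms have distinct closures. -/
theorem closures_of_distinct_atoms
    {C : Type*} [BooleanAlgebra C] [Finite C] (cl : C → C)
    (hle : ∀ a, a ≤ cl a)
    (hidem : ∀ a, cl (cl a) = cl a)
    (hsup : ∀ a b, cl (a ⊔ b) = cl a ⊔ cl b)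
    (h0 : cl ⊥ = ⊥)
    (hgen : ∀ S : Set C, {a | cl a = a} ⊆ S → ⊥ ∈ S →
      (∀ a ∈ S, aᶜ ∈ S) → (∀ a b, a ∈ S → b ∈ S → a ⊔ b ∈ S) → ∀ x, x ∈ S)
    (U V : C) (hU : IsAtom U) (hV : IsAtom V) (hne : U ≠ V) :
    cl U ≠ cl V := by
  intro hUV
  have hmono : ∀ a b : C, a ≤ b → cl a ≤ cl b := by
    intro a b hab
    have : cl (a ⊔ b) = cl a ⊔ cl b := hsup a b
    rw [sup_eq_right.mpr hab] at this
    rw [this]; exact le_sup_left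
  -- atoms are sup-prime in a distributive lattice, and le-compl iff not le
  have atom_compl : ∀ (W : C), IsAtom W → ∀ a : C, W ≤ aᶜ ↔ ¬ W ≤ a := by
    intro W hW a
    constructor
    · intro h h'
      have : W ≤ a ⊓ aᶜ := le_inf h' h
      rw [inf_compl_eq_bot] at this
      exact hW.1 (le_bot_iff.mp this)
    · intro h
      have hdecomp : W = (W ⊓ a) ⊔ (W ⊓ aᶜ) := by
        rw [← inf_sup_left, sup_compl_eq_top, inf_top_eq]
      rcases (hW.le_iff.mp (inf_le_left : W ⊓ a ≤ W)) with h1 | h1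
      · rw [h1, bot_sup_eq] at hdecomp
        exact hdecomp.le.trans inf_le_right
      · exact absurd (inf_eq_left.mp h1 : W ≤ a) h
  have atom_sup : ∀ (W : C), IsAtom W → ∀ a b : C, W ≤ a ⊔ b ↔ W ≤ a ∨ W ≤ b := by
    intro W hW a b
    constructor
    · intro h
      by_contra hc
      push_neg at hc
      have ha := (atom_compl W hW a).mpr hc.1
      have hb := (atom_compl W hW b).mpr hc.2
      have : W ≤ (a ⊔ b)ᶜ := by rw [compl_sup]; exact le_inf ha hb
      exact ((atom_compl W hW (a ⊔ b)).mp this) h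
    · rintro (h | h)
      · exact h.trans le_sup_left
      · exact h.trans le_sup_right
  have key : ∀ x : C, U ≤ x ↔ V ≤ x := by
    intro x
    refine hgen {x | U ≤ x ↔ V ≤ x} ?_ ?_ ?_ ?_ x
    · intro a ha
      simp only [Set.mem_setOf_eq] at ha ⊢
      constructor
      · intro h
        calc V ≤ cl V := hle V
          _ = cl U := hUV.symm
          _ ≤ cl a := hmono _ _ h
          _ = a := ha
      · intro h
        calc U ≤ cl U := hle U
          _ = cl V := hUV
          _ ≤ cl a := hmono _ _ h
          _ = a := ha
    · simp only [Set.mem_setOf_eq, le_bot_iff]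
      exact ⟨fun h => absurd h hU.1, fun h => absurd h hV.1⟩
    · intro a ha
      simp only [Set.mem_setOf_eq] at ha ⊢
      rw [atom_compl U hU, atom_compl V hV, ha]
    · intro a b ha hb
      simp only [Set.mem_setOf_eq] at ha hb ⊢
      rw [atom_sup U hU, atom_sup V hV, ha, hb]
  have hUleV : U ≤ V := (key V).mpr le_rfl
  rcases hV.le_iff.mp hUleV with h | h
  · exact hU.1 h
  · exact hne h
end

section
/- Let D be a finite TBA generated as a Boolean algebra by its closed elements, with top element X. Define a relation on the set P of atoms of D by q < p iff X_q ⊆ (X_p)'. Then < is transitive and antisymmetric (so P is a PO system), and the atoms form a complete P-partition of X: (X_p)' = ⋃_{q<p} X_q for all p. -/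
open scoped Classical

/-- An atom lies below a complement iff it does not lie below the element. -/
lemma atom_le_compl_iff {D : Type*} [BooleanAlgebra D] {a x : D} (ha : IsAtom a) :
    a ≤ xᶜ ↔ ¬ a ≤ x := by
  constructor
  · intro h h'
    have : a ≤ x ⊓ xᶜ := le_inf h' h
    rw [inf_compl_eq_bot, le_bot_iff] at this
    exact ha.1 this
  · intro h
    have hax : a ⊓ x = ⊥ := by
      rcases (ha.le_iff).mp (inf_le_left : a ⊓ x ≤ a) with h1 | h1
      · exact h1
      · exact absurd (h1 ▸ (inf_le_right : a ⊓ x ≤ x)) h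
    have : a = a ⊓ xᶜ := by
      have := inf_sup_left a x xᶜ
      rw [sup_compl_eq_top, inf_top_eq, hax, bot_sup_eq] at this
      exact this
    rw [this]; exact inf_le_right

lemma atom_le_sup_iff {D : Type*} [BooleanAlgebra D] {a x y : D} (ha : IsAtom a) :
    a ≤ x ⊔ y ↔ a ≤ x ∨ a ≤ y := by
  constructor
  · intro h
    by_cases hx : a ≤ x
    · exact Or.inl hx
    · right
      have hc : a ≤ xᶜ := (atom_le_compl_iff ha).mpr hx
      have : a ≤ (x ⊔ y) ⊓ xᶜ := le_inf h hc
      rw [inf_sup_right, inf_compl_eq_bot, bot_sup_eq] at this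
      exact this.trans inf_le_left
  · rintro (h | h)
    · exact h.trans le_sup_left
    · exact h.trans le_sup_right

/-- Let `D` be a finite TBA generated as a Boolean algebra by its closed elements.
Define `q < p` on atoms by `q ≤ p'`. Then `<` is transitive and antisymmetric (so the
atoms form a PO system), and the derived element of each atom `p` is exactly the
supremum of the atoms `q < p`: the atoms form a complete `P`-partition of the top. -/
theorem finite_TBA_atoms_form_complete_partition
    {D : Type*} [BooleanAlgebra D] [Fintype D] (d : D → D)
    (h0 : d ⊥ = ⊥)
    (hsup : ∀ a b, d (a ⊔ b) = d a ⊔ d b)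
    (hidem : ∀ a, d (d a) ≤ d a)
    (hgen : ∀ S : Set D, {a | d a ≤ a} ⊆ S → ⊥ ∈ S →
      (∀ a ∈ S, aᶜ ∈ S) → (∀ a b, a ∈ S → b ∈ S → a ⊔ b ∈ S) → ∀ x, x ∈ S) :
    (∀ p q r : D, IsAtom p → IsAtom q → IsAtom r → q ≤ d p → r ≤ d q → r ≤ d p) ∧
    (∀ p q : D, IsAtom p → IsAtom q → q ≤ d p → p ≤ d q → p = q) ∧
    (∀ p : D, IsAtom p →
      d p = (Finset.univ.filter (fun q : D => IsAtom q ∧ q ≤ d p)).sup id) := by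
  have hmono : ∀ a b : D, a ≤ b → d a ≤ d b := by
    intro a b hab
    have : d (a ⊔ b) = d a ⊔ d b := hsup a b
    rw [sup_eq_right.mpr hab] at this
    rw [this]; exact le_sup_left
  refine ⟨?_, ?_, ?_⟩
  · -- transitivity
    intro p q r hp hq hr hqp hrq
    have : d q ≤ d p := (hmono q (d p) hqp).trans (hidem p)
    exact hrq.trans this
  · -- antisymmetry
    intro p q hp hq hqp hpq
    set S : Set D := {x | (p ≤ x ↔ q ≤ x)} with hS
    have hall : ∀ x, x ∈ S := by
      apply hgen
      · intro x hx
        simp only [hS, Set.mem_setOf_eq] at hx ⊢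
        constructor
        · intro h
          exact hqp.trans ((hmono p x h).trans hx)
        · intro h
          exact hpq.trans ((hmono q x h).trans hx)
      · simp only [hS, Set.mem_setOf_eq, le_bot_iff]
        exact ⟨fun h => absurd h hp.1, fun h => absurd h hq.1⟩
      · intro x hx
        simp only [hS, Set.mem_setOf_eq] at hx ⊢
        rw [atom_le_compl_iff hp, atom_le_compl_iff hq]
        exact not_congr hx
      · intro x y hx hy
        simp only [hS, Set.mem_setOf_eq] at hx hy ⊢
        rw [atom_le_sup_iff hp, atom_le_sup_iff hq]
        exact or_congr hx hy
    have hqlep : q ≤ p := (hall p).mp le_rfl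
    rcases hp.le_iff.mp hqlep with h | h
    · exact absurd h hq.1
    · exact h.symm
  · -- the derived element is the sup of the atoms below it
    intro p hp
    apply le_antisymm
    · by_contra h
      set s := Finset.univ.filter (fun q : D => IsAtom q ∧ q ≤ d p) with hs
      have hne : d p ⊓ (s.sup id)ᶜ ≠ ⊥ := by
        intro hbot
        apply h
        have : d p ≤ s.sup id ⊔ (d p ⊓ (s.sup id)ᶜ) := by
          rw [sup_inf_left, sup_compl_eq_top, inf_top_eq]
          exact le_sup_right
        rw [hbot, sup_bot_eq] at this
        exact this
      obtain ⟨a, ha, hale⟩ := (eq_bot_or_exists_atom_le (d p ⊓ (s.sup id)ᶜ)).resolve_left hne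
      have has : a ∈ s := by
        simp only [hs, Finset.mem_filter, Finset.mem_univ, true_and]
        exact ⟨ha, hale.trans inf_le_left⟩
      have h1 : a ≤ s.sup id := Finset.le_sup (f := id) has
      have h2 : a ≤ (s.sup id)ᶜ := hale.trans inf_le_right
      have : a ≤ ⊥ := by
        have := le_inf h1 h2
        rwa [inf_compl_eq_bot] at this
      exact ha.1 (le_bot_iff.mp this)
    · apply Finset.sup_le
      intro q hq
      simp only [Finset.mem_filter] at hq
      exact hq.2.2
end

section
/- Let D be a finite TBA generated by its closed elements whose atoms {X_p | p ∈ P} form a complete P-partition of X = 1_D for the PO system P of atoms (with q < p iff X_q ≤ (X_p)'). Then the map γ : Q ↦ ⋃_{q∈Q} X_q is a TBA-isomorphism from (2^P, ') to D, where Q' = {p | p < q for some q ∈ Q}, and γ maps lower subsets of P bijectively onto closed elements of D. -/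
open scoped Classical

section helpers
variable {D : Type*} [BooleanAlgebra D]

lemma atom_le_sup_iff' {P : Type*} [DecidableEq P] {Xp : P → D}
    {a : D} (ha : IsAtom a) (s : Finset P) :
    a ≤ s.sup Xp ↔ ∃ p ∈ s, a ≤ Xp p := by
  induction s using Finset.induction_on with
  | empty => simp [le_bot_iff, ha.1]
  | @insert x s hx ih =>
    rw [Finset.sup_insert]
    constructor
    · intro h
      have key : a = (a ⊓ Xp x) ⊔ (a ⊓ s.sup Xp) := by
        rw [← inf_sup_left]; exact (inf_eq_left.mpr h).symm
      rcases ha.le_iff.mp (inf_le_left : a ⊓ Xp x ≤ a) with h1 | h1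
      · rcases ha.le_iff.mp (inf_le_left : a ⊓ s.sup Xp ≤ a) with h2 | h2
        · exact absurd (by rw [key, h1, h2, sup_idem]) ha.1
        · have : a ≤ s.sup Xp := by
            conv_lhs => rw [← h2]
            exact inf_le_right
          obtain ⟨p, hp, hle⟩ := ih.mp this
          exact ⟨p, Finset.mem_insert_of_mem hp, hle⟩
      · have : a ≤ Xp x := by
          conv_lhs => rw [← h1]
          exact inf_le_right
        exact ⟨x, Finset.mem_insert_self _ _, this⟩
    · rintro ⟨p, hp, hle⟩
      rcases Finset.mem_insert.mp hp with rfl | hp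
      · exact le_sup_of_le_left hle
      · exact le_sup_of_le_right (hle.trans (Finset.le_sup hp))

end helpers

/-- Let `D` be a finite TBA generated by its closed elements, whose atoms
`{X_p | p ∈ P}` form a complete `P`-partition of the top for the PO system `P`
(with `q < p` iff `X_q ≤ (X_p)'`). Then `γ : Q ↦ ⋃_{q ∈ Q} X_q` is a TBA-isomorphism
from `(2^P, ')` (where `Q' = {p | ∃ q ∈ Q, p < q}`) to `D`, and `γ` maps lower
subsets of `P` exactly onto closed elements of `D`. -/
theorem complete_partition_gives_TBA_iso
    {D P : Type*} [BooleanAlgebra D] [Fintype D] [Fintype P] (d : D → D)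
    (h0 : d ⊥ = ⊥)
    (hsup : ∀ a b, d (a ⊔ b) = d a ⊔ d b)
    (hidem : ∀ a, d (d a) ≤ d a)
    (hgen : ∀ S : Set D, {a | d a ≤ a} ⊆ S → ⊥ ∈ S →
      (∀ a ∈ S, aᶜ ∈ S) → (∀ a b, a ∈ S → b ∈ S → a ⊔ b ∈ S) → ∀ x, x ∈ S)
    (Xp : P → D)
    (hatom : ∀ p, IsAtom (Xp p))
    (hinj : Function.Injective Xp)
    (hsurj : ∀ a : D, IsAtom a → ∃ p, a = Xp p)
    (lt : P → P → Prop)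
    (hlt : ∀ p q : P, lt q p ↔ Xp q ≤ d (Xp p)) :
    ∀ γ : Set P → D,
      γ = (fun Q => (Finset.univ.filter (fun q : P => q ∈ Q)).sup Xp) →
      Function.Bijective γ ∧
      (∀ Q R : Set P, γ (Q ∪ R) = γ Q ⊔ γ R) ∧
      (∀ Q : Set P, γ Qᶜ = (γ Q)ᶜ) ∧
      (γ ∅ = ⊥) ∧
      (∀ Q : Set P, γ {p | ∃ q ∈ Q, lt p q} = d (γ Q)) ∧
      (∀ Q : Set P, (∀ p ∈ Q, ∀ q, lt q p → q ∈ Q) ↔ d (γ Q) ≤ γ Q) := by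
  intro γ hγ
  -- membership characterization: Xp p ≤ γ Q ↔ p ∈ Q
  have hmem : ∀ (p : P) (Q : Set P), Xp p ≤ γ Q ↔ p ∈ Q := by
    intro p Q
    rw [hγ]
    rw [atom_le_sup_iff' (hatom p)]
    constructor
    · rintro ⟨q, hq, hle⟩
      have : Xp p = Xp q := ((hatom q).le_iff.mp hle).resolve_left (hatom p).1
      have : p = q := hinj this
      simp only [Finset.mem_filter] at hq
      exact this ▸ hq.2
    · intro hp
      exact ⟨p, by simp [hp], le_rfl⟩
  -- atomistic representation
  have hrep : ∀ x : D, x = γ {p | Xp p ≤ x} := by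
    intro x
    have hle : γ {p | Xp p ≤ x} ≤ x := by
      rw [hγ]; apply Finset.sup_le; intro q hq
      simpa using (Finset.mem_filter.mp hq).2
    refine le_antisymm ?_ hle
    by_contra hcon
    have hne : x \ γ {p | Xp p ≤ x} ≠ ⊥ := by
      intro h
      exact hcon (sdiff_eq_bot_iff.mp h)
    obtain ⟨a, haat, hale⟩ := (eq_bot_or_exists_atom_le _).resolve_left hne
    obtain ⟨p, rfl⟩ := hsurj a haat
    have h1 : Xp p ≤ x := hale.trans sdiff_le
    have h2 : Xp p ≤ γ {p | Xp p ≤ x} := (hmem p _).mpr h1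
    have h3 : Xp p ≤ (γ {p | Xp p ≤ x})ᶜ := hale.trans (sdiff_le_iff.mpr (by simp))
    have : Xp p ≤ ⊥ := by
      have := le_inf h2 h3
      rwa [inf_compl_eq_bot] at this
    exact (hatom p).1 (le_bot_iff.mp this)
  -- monotonicity of γ
  have hγmono : ∀ Q R : Set P, Q ⊆ R → γ Q ≤ γ R := by
    intro Q R h
    rw [hγ]
    exact Finset.sup_mono (by
      intro x hx
      simp only [Finset.mem_filter] at *
      exact ⟨hx.1, h hx.2⟩)
  have htop : γ Set.univ = ⊤ := by
    have h := hrep ⊤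
    rw [show {p : P | Xp p ≤ ⊤} = Set.univ from by ext; simp] at h
    exact h.symm
  have hunion : ∀ Q R : Set P, γ (Q ∪ R) = γ Q ⊔ γ R := by
    intro Q R
    simp only [hγ, Set.mem_union]
    rw [Finset.filter_or, Finset.sup_union]
  have hdsup : ∀ s : Finset P, d (s.sup Xp) = s.sup (fun q => d (Xp q)) := by
    intro s
    induction s using Finset.induction_on with
    | empty => simpa using h0
    | @insert x s hx ih => simp [Finset.sup_insert, hsup, ih]
  have hdatom : ∀ (p : P) (Q : Set P), Xp p ≤ d (γ Q) ↔ ∃ q ∈ Q, lt p q := by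
    intro p Q
    rw [hγ]
    simp only
    rw [hdsup, atom_le_sup_iff' (hatom p)]
    constructor
    · rintro ⟨q, hq, hle⟩
      exact ⟨q, (Finset.mem_filter.mp hq).2, (hlt q p).mpr hle⟩
    · rintro ⟨q, hq, hl⟩
      exact ⟨q, by simp [hq], (hlt q p).mp hl⟩
  have hd : ∀ Q : Set P, γ {p | ∃ q ∈ Q, lt p q} = d (γ Q) := by
    intro Q
    rw [hrep (d (γ Q))]
    congr 1
    ext p
    simp only [Set.mem_setOf_eq]
    exact (hdatom p Q).symm
  refine ⟨⟨?_, ?_⟩, hunion, ?_, ?_, hd, ?_⟩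
  · intro Q R h
    ext p
    rw [← hmem p Q, ← hmem p R, h]
  · intro x
    exact ⟨_, (hrep x).symm⟩
  · intro Q
    have hdisj : Disjoint (γ Q) (γ Qᶜ) := by
      rw [hγ]
      simp only
      rw [Finset.disjoint_sup_left]
      intro p hp
      rw [Finset.disjoint_sup_right]
      intro q hq
      simp only [Finset.mem_filter, Set.mem_compl_iff] at hp hq
      have hne : Xp p ≠ Xp q := fun h => hq.2 (hinj h ▸ hp.2)
      exact (hatom p).disjoint_of_ne (hatom q) hne
    have hcod : Codisjoint (γ Q) (γ Qᶜ) := by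
      rw [codisjoint_iff, ← hunion, Set.union_compl_self, htop]
    exact (IsCompl.compl_eq ⟨hdisj, hcod⟩).symm
  · rw [hγ]; simp
  · intro Q
    rw [← hd Q]
    constructor
    · intro hlow
      apply hγmono
      rintro p ⟨q, hq, hl⟩
      exact hlow q hq p hl
    · intro hle p hp q hql
      exact (hmem q Q).mp (le_trans ((hmem q {p | ∃ q ∈ Q, lt p q}).mpr ⟨p, hp, hql⟩) hle)
end

section
/- Let P be a finite PO system and {X_p | p ∈ P} a complete P-partition of the Stone space X of a Boolean ring R (identified with the compact open subsets of X). Then a point x lies in X_p if and only if x has a neighbourhood basis of p-trim compact open sets. -/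
/-- The type of a subset `A` relative to the partition `Xp`. -/
def typeOf {X P : Type*} (Xp : P → Set X) (A : Set X) : Set P :=
  {p | (A ∩ Xp p).Nonempty}

/-- `A` is a `p`-trim set: a compact open set whose type is `{q | q ≥ p}`, meeting
`X_p` in exactly one point when `p ∈ P^d` (i.e. `p ≮ p`). -/
def IsTrim {X P : Type*} [TopologicalSpace X] (lt : P → P → Prop)
    (Xp : P → Set X) (p : P) (A : Set X) : Prop :=
  IsCompact A ∧ IsOpen A ∧ typeOf Xp A = {q | lt p q ∨ q = p} ∧
    (¬ lt p p → ∃! x, x ∈ A ∩ Xp p)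

/-- In a locally compact Hausdorff totally disconnected space, every point of an
open set lies in a compact open subset of it. -/
lemma exists_compact_open_mem {X : Type*} [TopologicalSpace X] [LocallyCompactSpace X]
    [T2Space X] [TotallyDisconnectedSpace X] {x : X} {W : Set X} (hW : IsOpen W)
    (hx : x ∈ W) : ∃ A : Set X, IsCompact A ∧ IsOpen A ∧ x ∈ A ∧ A ⊆ W := by
  obtain ⟨s, scomp, xs, sW⟩ := exists_compact_subset hW hx
  obtain ⟨V, hV, hxV, hVs⟩ :=
    loc_compact_Haus_tot_disc_of_zero_dim.mem_nhds_iff.1 (isOpen_interior.mem_nhds xs)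
  exact ⟨V, scomp.of_isClosed_subset hV.1 (hVs.trans interior_subset), hV.2, hxV, fun y hy =>
    sW (interior_subset (hVs hy))⟩

/-- For a complete `P`-partition of the Stone space `X` of a Boolean ring, `P` a finite
PO system: `x ∈ X_p` iff `x` has a neighbourhood basis of `p`-trim sets. -/
theorem mem_partition_iff_trim_nhds_basis
    {X P : Type*} [TopologicalSpace X] [LocallyCompactSpace X] [T2Space X]
    [TotallyDisconnectedSpace X] [SecondCountableTopology X] [Fintype P]
    (lt : P → P → Prop)
    (htrans : ∀ a b c, lt a b → lt b c → lt a c)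
    (hanti : ∀ a b, lt a b → lt b a → a = b)
    (Xp : P → Set X)
    (hnonempty : ∀ p, (Xp p).Nonempty)
    (hdisj : Pairwise (Function.onFun Disjoint Xp))
    (hcover : (⋃ p, Xp p) = Set.univ)
    (hderiv : ∀ p, derivedSet (Xp p) = ⋃ q ∈ {q | lt q p}, Xp q) :
    ∀ (x : X) (p : P), x ∈ Xp p ↔
      ∀ U ∈ nhds x, ∃ A : Set X, IsTrim lt Xp p A ∧ x ∈ A ∧ A ⊆ U := by
  intro x p
  have hdisj' : ∀ {a b : P} {y : X}, y ∈ Xp a → y ∈ Xp b → a = b := by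
    intro a b y ha hb
    by_contra hne
    exact Set.disjoint_left.1 (hdisj hne) ha hb
  constructor
  · -- forward direction
    intro hx U hU
    obtain ⟨O, hOU, hOo, hxO⟩ := mem_nhds_iff.1 hU
    -- avoid closures of bad classes
    set Bad : Set X := ⋃ q ∈ {q : P | ¬ (lt p q ∨ q = p)}, closure (Xp q) with hBad
    have hBadClosed : IsClosed Bad := by
      apply Set.Finite.isClosed_biUnion (Set.toFinite _)
      exact fun q _ => isClosed_closure
    have hxBad : x ∉ Bad := by
      intro hmem
      simp only [hBad, Set.mem_iUnion] at hmem
      obtain ⟨q, hq, hxq⟩ := hmem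
      -- x ∈ closure (Xp q) with ¬ (lt p q ∨ q = p)
      by_cases hxin : x ∈ Xp q
      · exact hq (Or.inr (hdisj' hxin hx))
      · have hacc : x ∈ derivedSet (Xp q) := by
          rw [mem_derivedSet, accPt_iff_nhds]
          intro V hV
          obtain ⟨y, hy1, hy2⟩ := mem_closure_iff_nhds.1 hxq V hV
          exact ⟨y, ⟨hy1, hy2⟩, fun h => hxin (h ▸ hy2)⟩
        rw [hderiv q] at hacc
        simp only [Set.mem_iUnion] at hacc
        obtain ⟨r, hr, hxr⟩ := hacc
        exact hq (Or.inl ((hdisj' hxr hx) ▸ hr))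
    -- isolation neighbourhood when ¬ lt p p
    obtain ⟨V, hVo, hxV, hVuniq⟩ :
        ∃ V : Set X, IsOpen V ∧ x ∈ V ∧ (¬ lt p p → ∀ y ∈ V ∩ Xp p, y = x) := by
      by_cases hpp : lt p p
      · exact ⟨Set.univ, isOpen_univ, trivial, fun h => absurd hpp h⟩
      · have hnotacc : x ∉ derivedSet (Xp p) := by
          intro hacc
          rw [hderiv p] at hacc
          simp only [Set.mem_iUnion] at hacc
          obtain ⟨r, hr, hxr⟩ := hacc
          exact hpp ((hdisj' hxr hx) ▸ hr)
        rw [mem_derivedSet, accPt_iff_nhds] at hnotacc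
        push_neg at hnotacc
        obtain ⟨W, hW, hWu⟩ := hnotacc
        obtain ⟨V, hVW, hVo, hxV⟩ := mem_nhds_iff.1 hW
        exact ⟨V, hVo, hxV, fun _ y hy => hWu y ⟨hVW hy.1, hy.2⟩⟩
    -- compact open set inside everything
    obtain ⟨A, hAc, hAo, hxA, hAsub⟩ :=
      exists_compact_open_mem (X := X) ((hOo.inter hBadClosed.isOpen_compl).inter hVo)
        ⟨⟨hxO, hxBad⟩, hxV⟩
    have hAO : A ⊆ O := fun y hy => (hAsub hy).1.1
    have hABad : ∀ y ∈ A, y ∉ Bad := fun y hy => (hAsub hy).1.2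
    have hAV : A ⊆ V := fun y hy => (hAsub hy).2
    refine ⟨A, ⟨hAc, hAo, ?_, ?_⟩, hxA, hAO.trans hOU⟩
    · -- the type is exactly {q | lt p q ∨ q = p}
      ext q
      simp only [typeOf, Set.mem_setOf_eq]
      constructor
      · rintro ⟨y, hyA, hyq⟩
        by_contra hq
        exact hABad y hyA (Set.mem_biUnion hq (subset_closure hyq))
      · rintro (hq | rfl)
        · -- x ∈ derivedSet (Xp q), so A meets Xp q
          have hacc : x ∈ derivedSet (Xp q) := by
            rw [hderiv q]
            exact Set.mem_biUnion hq hx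
          rw [mem_derivedSet, accPt_iff_nhds] at hacc
          obtain ⟨y, hy, _⟩ := hacc A (hAo.mem_nhds hxA)
          exact ⟨y, hy⟩
        · exact ⟨x, hxA, hx⟩
    · intro hpp
      exact ⟨x, ⟨hxA, hx⟩, fun y hy => hVuniq hpp y ⟨hAV hy.1, hy.2⟩⟩
  · -- backward direction
    intro hB
    obtain ⟨q, hq⟩ : ∃ q, x ∈ Xp q := by
      have : x ∈ ⋃ p, Xp p := hcover ▸ Set.mem_univ x
      simpa using this
    obtain ⟨A₀, ⟨_, _, hT, _⟩, hxA₀, _⟩ := hB Set.univ Filter.univ_mem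
    have hq' : lt p q ∨ q = p := by
      have : q ∈ typeOf Xp A₀ := ⟨x, hxA₀, hq⟩
      rwa [hT] at this
    rcases hq' with hpq | rfl
    · by_cases hqp : q = p
      · exact hqp ▸ hq
      · -- x is an accumulation point of Xp p
        have hacc : x ∈ derivedSet (Xp p) := by
          rw [mem_derivedSet, accPt_iff_nhds]
          intro U hU
          obtain ⟨A, ⟨_, _, hT', _⟩, hxA, hAU⟩ := hB U hU
          have hp : p ∈ typeOf Xp A := by rw [hT']; exact Or.inr rfl
          obtain ⟨y, hyA, hyp⟩ := hp
          refine ⟨y, ⟨hAU hyA, hyp⟩, fun h => hqp (hdisj' hq (h ▸ hyp))⟩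
        rw [hderiv p] at hacc
        simp only [Set.mem_iUnion] at hacc
        obtain ⟨r, hr, hxr⟩ := hacc
        have : r = q := hdisj' hxr hq
        exact absurd (hanti p q hpq (this ▸ hr)) (fun h => hqp h.symm)
    · exact hq
end

section
/- Let P be a finite PO system and {X_p | p ∈ P} a complete P-partition of the Stone space X of a Boolean ring R. If A is a p-trim compact open set and q > p, then A can be written as a disjoint union A = B ⊔ C where B is p-trim and C is q-trim. -/
/-- For a complete `P`-partition of the Stone space of a Boolean ring, `P` a finite PO
system: if `A` is `p`-trim and `q > p`, then `A = B ⊔ C` with `B` `p`-trim and `C`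
`q`-trim. -/
theorem trim_set_splits
    {X P : Type*} [TopologicalSpace X] [LocallyCompactSpace X] [T2Space X]
    [TotallyDisconnectedSpace X] [SecondCountableTopology X] [Fintype P]
    (lt : P → P → Prop)
    (htrans : ∀ a b c, lt a b → lt b c → lt a c)
    (hanti : ∀ a b, lt a b → lt b a → a = b)
    (Xp : P → Set X)
    (hnonempty : ∀ p, (Xp p).Nonempty)
    (hdisj : Pairwise (Function.onFun Disjoint Xp))
    (hcover : (⋃ p, Xp p) = Set.univ)
    (hderiv : ∀ p, derivedSet (Xp p) = ⋃ q ∈ {q | lt q p}, Xp q)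
    (p q : P) (hpq : lt p q) (A : Set X) (hA : IsTrim lt Xp p A) :
    ∃ B C : Set X, Disjoint B C ∧ A = B ∪ C ∧
      IsTrim lt Xp p B ∧ IsTrim lt Xp q C := by
  classical
  obtain ⟨hAc, hAo, hAtype, hAuniq⟩ := hA
  -- membership in the same `Xp` piece from disjointness
  have hsame : ∀ {r s : P} {z : X}, z ∈ Xp r → z ∈ Xp s → r = s := by
    intro r s z hr hs
    by_contra hne
    exact (hdisj hne).le_bot ⟨hr, hs⟩ |>.elim
  -- witnesses for each element of the type of A
  set f : P → X := fun r => if h : (A ∩ Xp r).Nonempty then h.choose else (hnonempty r).choose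
    with hfdef
  have hf : ∀ r, (A ∩ Xp r).Nonempty → f r ∈ A ∩ Xp r := by
    intro r h
    simp only [hfdef, dif_pos h]
    exact h.choose_spec
  set S : Set X := Set.range f with hSdef
  have hSfin : S.Finite := Set.finite_range f
  -- the point x ∈ A ∩ Xp p
  have hpA : p ∈ typeOf Xp A := by rw [hAtype]; exact Or.inr rfl
  have hx : f p ∈ A ∩ Xp p := hf p hpA
  -- x is an accumulation point of Xp q
  have hxacc : AccPt (f p) (Filter.principal (Xp q)) := by
    have : f p ∈ derivedSet (Xp q) := by
      rw [hderiv q]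
      exact Set.mem_biUnion hpq hx.2
    exact this
  -- find y ∈ A ∩ Xp q with y ∉ S
  have hSx_closed : IsClosed (S \ {f p}) := (hSfin.diff (t := {f p})).isClosed
  have hOopen : IsOpen (A \ (S \ {f p})) := hAo.sdiff hSx_closed
  have hOx : f p ∈ A \ (S \ {f p}) := ⟨hx.1, fun h => h.2 rfl⟩
  obtain ⟨y, hymem, hyx⟩ := accPt_iff_nhds.1 hxacc _ (hOopen.mem_nhds hOx)
  have hyO : y ∈ A \ (S \ {f p}) := hymem.1
  have hyA : y ∈ A := hyO.1
  have hyXq : y ∈ Xp q := hymem.2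
  have hyS : y ∉ S := fun h => hyO.2 ⟨h, fun h' => hyx (by simpa using h')⟩
  -- the "bad" closed set to avoid
  set K : Set X := ⋃ r ∈ {r : P | ¬(lt q r ∨ r = q)}, closure (Xp r) with hKdef
  have hKclosed : IsClosed K :=
    Set.Finite.isClosed_biUnion (Set.toFinite _) (fun r _ => isClosed_closure)
  have hyK : y ∉ K := by
    intro hy
    rw [hKdef] at hy
    obtain ⟨r, hr, hyr⟩ := Set.mem_iUnion₂.1 hy
    -- y ∈ closure (Xp r) with r bad
    by_cases hyr' : y ∈ Xp r
    · exact hr (Or.inr (hsame hyr' hyXq))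
    · have : y ∈ derivedSet (Xp r) := by
        have : AccPt y (Filter.principal (Xp r)) := by
          rw [accPt_iff_nhds]
          intro U hU
          obtain ⟨z, hzU, hzr⟩ := (mem_closure_iff_nhds).1 hyr U hU
          exact ⟨z, ⟨hzU, hzr⟩, fun h => hyr' (h ▸ hzr)⟩
        exact this
      rw [hderiv r] at this
      obtain ⟨s, hs, hys⟩ := Set.mem_iUnion₂.1 this
      have : s = q := hsame hys hyXq
      exact hr (Or.inl (this ▸ hs))
  -- the set guaranteeing uniqueness for q when needed
  set W : Set X := if lt q q then Set.univ else (closure (Xp q \ {y}))ᶜ with hWdef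
  have hWopen : IsOpen W := by
    rw [hWdef]; split
    · exact isOpen_univ
    · exact isClosed_closure.isOpen_compl
  have hyW : y ∈ W := by
    rw [hWdef]; split
    · trivial
    · rename_i hqq
      intro hy
      -- then y would be an accumulation point of Xp q
      have hacc : AccPt y (Filter.principal (Xp q)) := by
        rw [accPt_iff_nhds]
        intro U hU
        obtain ⟨z, hzU, hzq⟩ := (mem_closure_iff_nhds).1 hy U hU
        exact ⟨z, ⟨hzU, hzq.1⟩, fun h => hzq.2 h⟩
      have : y ∈ derivedSet (Xp q) := hacc
      rw [hderiv q] at this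
      obtain ⟨s, hs, hys⟩ := Set.mem_iUnion₂.1 this
      exact hqq ((hsame hys hyXq) ▸ hs)
  -- the open set around y
  set U : Set X := A ∩ Kᶜ ∩ Sᶜ ∩ W with hUdef
  have hUopen : IsOpen U :=
    ((hAo.inter hKclosed.isOpen_compl).inter hSfin.isClosed.isOpen_compl).inter hWopen
  have hyU : y ∈ U := ⟨⟨⟨hyA, hyK⟩, hyS⟩, hyW⟩
  -- extract a clopen set C with y ∈ C ⊆ U
  obtain ⟨C, hCclopen, hyC, hCU⟩ :=
    loc_compact_Haus_tot_disc_of_zero_dim.exists_subset_of_mem_open hyU hUopen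
  have hCA : C ⊆ A := fun z hz => (hCU hz).1.1.1
  have hCK : ∀ z ∈ C, z ∉ K := fun z hz => (hCU hz).1.1.2
  have hCS : ∀ z ∈ C, z ∉ S := fun z hz => (hCU hz).1.2
  have hCW : C ⊆ W := fun z hz => (hCU hz).2
  have hCcompact : IsCompact C := hAc.of_isClosed_subset hCclopen.1 hCA
  refine ⟨A \ C, C, Set.disjoint_sdiff_left, (Set.diff_union_of_subset hCA).symm, ?_, ?_⟩
  · -- B = A \ C is p-trim
    have hBclosed : IsClosed (A \ C) := hAc.isClosed.sdiff hCclopen.2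
    refine ⟨hAc.of_isClosed_subset hBclosed Set.diff_subset, hAo.sdiff hCclopen.1, ?_, ?_⟩
    · ext r
      constructor
      · rintro ⟨z, hzB, hzr⟩
        have : r ∈ typeOf Xp A := ⟨z, hzB.1, hzr⟩
        rw [hAtype] at this
        exact this
      · intro hr
        have hrA : r ∈ typeOf Xp A := by rw [hAtype]; exact hr
        have hfr := hf r hrA
        exact ⟨f r, ⟨hfr.1, fun h => hCS _ h ⟨r, rfl⟩⟩, hfr.2⟩
    · intro hpp
      obtain ⟨x0, hx0, hx0u⟩ := hAuniq hpp
      have hfp : f p = x0 := hx0u _ hx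
      refine ⟨x0, ⟨⟨hx0.1, ?_⟩, hx0.2⟩, fun z hz => hx0u z ⟨hz.1.1, hz.2⟩⟩
      intro hC
      exact hCS _ hC ⟨p, hfp⟩
  · -- C is q-trim
    refine ⟨hCcompact, hCclopen.2, ?_, ?_⟩
    · ext r
      constructor
      · rintro ⟨z, hzC, hzr⟩
        by_contra hr
        exact hCK z hzC (Set.mem_biUnion hr (subset_closure hzr))
      · rintro (hqr | rfl)
        · -- y accumulates on Xp r
          have hacc : AccPt y (Filter.principal (Xp r)) := by
            have : y ∈ derivedSet (Xp r) := by
              rw [hderiv r]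
              exact Set.mem_biUnion hqr hyXq
            exact this
          obtain ⟨z, hz, -⟩ := accPt_iff_nhds.1 hacc C (hCclopen.2.mem_nhds hyC)
          exact ⟨z, hz.1, hz.2⟩
        · exact ⟨y, hyC, hyXq⟩
    · intro hqq
      refine ⟨y, ⟨hyC, hyXq⟩, ?_⟩
      rintro z ⟨hzC, hzq⟩
      have hzW := hCW hzC
      rw [hWdef, if_neg hqq] at hzW
      by_contra hzy
      exact hzW (subset_closure ⟨hzq, hzy⟩)
end

section
/- Let P be a finite PO system, {X_p} a complete P-partition of the Stone space X of a Boolean ring R, and A a compact open subset of X with p ∈ P^d ∩ T(A)_min (p is a minimal element of the type of A with p ≮ p). Then A ∩ X_p is finite. -/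
/-- For a complete `P`-partition of the Stone space of a Boolean ring, `P` a finite PO
system: if `A` is compact open and `p ∈ P^d` is a minimal element of the type of `A`,
then `A ∩ X_p` is finite. -/
theorem compact_open_meets_discrete_min_piece_finitely
    {X P : Type*} [TopologicalSpace X] [LocallyCompactSpace X] [T2Space X]
    [TotallyDisconnectedSpace X] [Fintype P]
    (lt : P → P → Prop)
    (htrans : ∀ a b c, lt a b → lt b c → lt a c)
    (hanti : ∀ a b, lt a b → lt b a → a = b)
    (Xp : P → Set X)
    (hnonempty : ∀ p, (Xp p).Nonempty)
    (hdisj : Pairwise (Function.onFun Disjoint Xp))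
    (hcover : (⋃ p, Xp p) = Set.univ)
    (hderiv : ∀ p, derivedSet (Xp p) = ⋃ q ∈ {q | lt q p}, Xp q)
    (A : Set X) (hAc : IsCompact A) (hAo : IsOpen A)
    (p : P) (hpd : ¬ lt p p) (hpT : p ∈ typeOf Xp A)
    (hmin : ∀ q ∈ typeOf Xp A, lt q p → q = p) :
    (A ∩ Xp p).Finite := by
  by_contra hinf
  rw [← Set.not_infinite, not_not] at hinf
  obtain ⟨x, hxA, hacc⟩ := hinf.exists_accPt_of_subset_isCompact hAc Set.inter_subset_left
  have hxd : x ∈ derivedSet (Xp p) :=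
    derivedSet_mono _ _ Set.inter_subset_right hacc
  rw [hderiv] at hxd
  simp only [Set.mem_iUnion, Set.mem_setOf_eq] at hxd
  obtain ⟨q, hq, hxq⟩ := hxd
  exact hpd (hmin q ⟨x, hxA, hxq⟩ hq ▸ hq)
end

section
/- Let P be a finite PO system and {X_p | p ∈ P} a complete P-partition of the Stone space of a Boolean ring R. Every nonzero compact open set A admits a μ(A)-partition: writing F = T(A)_min, A can be partitioned into disjoint trim compact open sets containing exactly one p-trim set for each p ∈ F \ P^d and exactly |A ∩ X_p| p-trim sets for each p ∈ F ∩ P^d. -/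
open scoped Classical

open Filter

section Aux
variable {X P : Type*} [TopologicalSpace X] [LocallyCompactSpace X] [T2Space X]
  [TotallyDisconnectedSpace X]

/-- compact open neighborhood basis -/
lemma exists_compact_open_nbhd {U : Set X} {x : X} (hU : IsOpen U) (hx : x ∈ U) :
    ∃ V : Set X, IsCompact V ∧ IsOpen V ∧ x ∈ V ∧ V ⊆ U := by
  obtain ⟨s, scomp, hxs, hsU⟩ := exists_compact_subset hU hx
  obtain ⟨V, hVclopen, hxV, hVs⟩ :=
    loc_compact_Haus_tot_disc_of_zero_dim.mem_nhds_iff.1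
      (isOpen_interior.mem_nhds hxs)
  exact ⟨V, scomp.of_isClosed_subset hVclopen.1 (hVs.trans interior_subset),
    hVclopen.2, hxV, (hVs.trans interior_subset).trans hsU⟩

lemma typeOf_mono {Xp : P → Set X} {A B : Set X} (h : A ⊆ B) : typeOf Xp A ⊆ typeOf Xp B :=
  fun _ ⟨y, hy1, hy2⟩ => ⟨y, h hy1, hy2⟩

lemma typeOf_union {Xp : P → Set X} {A B : Set X} :
    typeOf Xp (A ∪ B) = typeOf Xp A ∪ typeOf Xp B := by
  ext p
  constructor
  · rintro ⟨y, hy1 | hy1, hy2⟩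
    · exact Or.inl ⟨y, hy1, hy2⟩
    · exact Or.inr ⟨y, hy1, hy2⟩
  · rintro (⟨y, hy1, hy2⟩ | ⟨y, hy1, hy2⟩)
    · exact ⟨y, Or.inl hy1, hy2⟩
    · exact ⟨y, Or.inr hy1, hy2⟩

end Aux

section Aux2
variable {X P : Type*} [TopologicalSpace X] [LocallyCompactSpace X] [T2Space X]
  [TotallyDisconnectedSpace X] [Fintype P]
  (lt : P → P → Prop) (Xp : P → Set X)

/-- types of open sets around a point of `Xp p` contain the upper set of `p`. -/
lemma up_subset_typeOf
    (hderiv : ∀ p, derivedSet (Xp p) = ⋃ q ∈ {q | lt q p}, Xp q)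
    {p : P} {x : X} {U : Set X} (hx : x ∈ Xp p) (hU : IsOpen U) (hxU : x ∈ U) :
    {q | lt p q ∨ q = p} ⊆ typeOf Xp U := by
  rintro q (hq | rfl)
  · have hacc : AccPt x (𝓟 (Xp q)) := by
      rw [← mem_derivedSet, hderiv q]
      exact Set.mem_biUnion hq hx
    obtain ⟨y, hy, -⟩ := (accPt_iff_nhds (x := x) (C := Xp q)).1 hacc U (hU.mem_nhds hxU)
    exact ⟨y, hy.1, hy.2⟩
  · exact ⟨x, hxU, hx⟩

/-- trim neighborhoods exist around any point of an open set, inside any open nbhd `W`. -/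
lemma exists_trim_nbhd
    (hdisj : Pairwise (Function.onFun Disjoint Xp))
    (hderiv : ∀ p, derivedSet (Xp p) = ⋃ q ∈ {q | lt q p}, Xp q)
    {p : P} {x : X} {A W : Set X} (hx : x ∈ Xp p) (hA : IsOpen A) (hxA : x ∈ A)
    (hW : IsOpen W) (hxW : x ∈ W) :
    ∃ B : Set X, IsCompact B ∧ IsOpen B ∧ x ∈ B ∧ B ⊆ A ∩ W ∧
      typeOf Xp B = {q | lt p q ∨ q = p} ∧ (¬ lt p p → B ∩ Xp p ⊆ {x}) := by
  classical
  -- for each r not in the up-set of p, an open nbhd of x disjoint from Xp r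
  have havoid : ∀ r : P, ¬ (lt p r ∨ r = p) → ∃ U : Set X, IsOpen U ∧ x ∈ U ∧ U ∩ Xp r = ∅ := by
    intro r hr
    push_neg at hr
    have hxr : x ∉ Xp r := by
      intro hxr
      refine hr.2 ?_
      by_contra hne
      exact Set.disjoint_left.1 (hdisj hne) hxr hx
    have hnacc : ¬ AccPt x (𝓟 (Xp r)) := by
      rw [← mem_derivedSet, hderiv r]
      intro hmem
      obtain ⟨q, hq, hxq⟩ := Set.mem_iUnion₂.1 hmem
      have : q = p := by
        by_contra hne
        exact Set.disjoint_left.1 (hdisj hne) hxq hx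
      exact hr.1 (this ▸ hq)
    rw [accPt_iff_nhds] at hnacc
    push_neg at hnacc
    obtain ⟨U, hU, hU2⟩ := hnacc
    obtain ⟨U', hU'U, hU'o, hxU'⟩ := mem_nhds_iff.1 hU
    refine ⟨U', hU'o, hxU', ?_⟩
    ext y
    simp only [Set.mem_inter_iff, Set.mem_empty_iff_false, iff_false, not_and]
    intro hy hyr
    have := hU2 y ⟨hU'U hy, hyr⟩
    subst this
    exact hxr hyr
  choose! Uav hUav using havoid
  -- nbhd controlling Xp p when ¬ lt p p
  have hself : ∃ V : Set X, IsOpen V ∧ x ∈ V ∧ (¬ lt p p → V ∩ Xp p ⊆ {x}) := by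
    by_cases hpp : lt p p
    · exact ⟨Set.univ, isOpen_univ, trivial, fun h => absurd hpp h⟩
    · have hnacc : ¬ AccPt x (𝓟 (Xp p)) := by
        rw [← mem_derivedSet, hderiv p]
        intro hmem
        obtain ⟨q, hq, hxq⟩ := Set.mem_iUnion₂.1 hmem
        have : q = p := by
          by_contra hne
          exact Set.disjoint_left.1 (hdisj hne) hxq hx
        exact hpp (this ▸ hq)
      rw [accPt_iff_nhds] at hnacc
      push_neg at hnacc
      obtain ⟨U, hU, hU2⟩ := hnacc
      obtain ⟨U', hU'U, hU'o, hxU'⟩ := mem_nhds_iff.1 hU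
      exact ⟨U', hU'o, hxU', fun _ y ⟨hy1, hy2⟩ => hU2 y ⟨hU'U hy1, hy2⟩⟩
  obtain ⟨V, hVo, hxV, hVp⟩ := hself
  set S : Finset P := Finset.univ.filter (fun r => ¬ (lt p r ∨ r = p)) with hS
  set U0 : Set X := A ∩ W ∩ V ∩ ⋂ r ∈ S, Uav r with hU0
  have hU0o : IsOpen U0 := by
    refine (((hA.inter hW).inter hVo).inter (Set.Finite.isOpen_biInter S.finite_toSet ?_))
    intro r hr
    exact (hUav r (by simpa [hS] using (Finset.mem_filter.1 hr).2)).1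
  have hxU0 : x ∈ U0 := by
    refine ⟨⟨⟨hxA, hxW⟩, hxV⟩, ?_⟩
    refine Set.mem_biInter fun r hr => (hUav r (by simpa [hS] using (Finset.mem_filter.1 hr).2)).2.1
  obtain ⟨B, hBc, hBo, hxB, hBU0⟩ := exists_compact_open_nbhd hU0o hxU0
  refine ⟨B, hBc, hBo, hxB, fun y hy => (hBU0 hy).1.1, ?_, ?_⟩
  · apply Set.Subset.antisymm
    · rintro r ⟨y, hy1, hy2⟩
      by_contra hr
      have hrS : r ∈ S := Finset.mem_filter.2 ⟨Finset.mem_univ r, hr⟩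
      have := Set.mem_iInter₂.1 (hBU0 hy1).2 r hrS
      have h0 := (hUav r hr).2.2
      exact absurd (Set.eq_empty_iff_forall_notMem.1 h0 y ⟨this, hy2⟩) (fun h => h)
    · exact up_subset_typeOf lt Xp hderiv hx hBo hxB
  · intro hpp y hy
    exact hVp hpp ⟨(hBU0 hy.1).1.2, hy.2⟩

end Aux2

section Aux3
variable {X P : Type*} [TopologicalSpace X] [T2Space X] [Fintype P]
  (lt : P → P → Prop)

/-- existence of minimal elements below a given element in a finite "PO system". -/
lemma exists_minimal_below
    (htrans : ∀ a b c, lt a b → lt b c → lt a c)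
    (hanti : ∀ a b, lt a b → lt b a → a = b)
    (T : Set P) : ∀ q ∈ T, ∃ p, p ∈ T ∧ (lt p q ∨ p = q) ∧ ∀ r ∈ T, lt r p → r = p := by
  classical
  suffices key : ∀ n (q : P), q ∈ T →
      (Finset.univ.filter (fun x => x ∈ T ∧ lt x q ∧ x ≠ q)).card ≤ n →
      ∃ p, p ∈ T ∧ (lt p q ∨ p = q) ∧ ∀ r ∈ T, lt r p → r = p by
    intro q hq
    exact key _ q hq le_rfl
  intro n
  induction n with
  | zero =>
    intro q hq hcard
    refine ⟨q, hq, Or.inr rfl, fun r hr hrq => ?_⟩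
    by_contra hne
    have hmem : r ∈ Finset.univ.filter (fun x => x ∈ T ∧ lt x q ∧ x ≠ q) :=
      Finset.mem_filter.2 ⟨Finset.mem_univ r, hr, hrq, hne⟩
    have := Finset.card_eq_zero.1 (Nat.le_zero.1 hcard)
    rw [this] at hmem
    exact Finset.notMem_empty r hmem
  | succ n ih =>
    intro q hq hcard
    by_cases hmin : ∀ r ∈ T, lt r q → r = q
    · exact ⟨q, hq, Or.inr rfl, hmin⟩
    · push_neg at hmin
      obtain ⟨r, hrT, hrq, hrne⟩ := hmin
      have hsub : Finset.univ.filter (fun x => x ∈ T ∧ lt x r ∧ x ≠ r) ⊆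
          (Finset.univ.filter (fun x => x ∈ T ∧ lt x q ∧ x ≠ q)).erase r := by
        intro x hx
        obtain ⟨-, hxT, hxr, hxner⟩ := Finset.mem_filter.1 hx
        refine Finset.mem_erase.2 ⟨hxner, Finset.mem_filter.2 ⟨Finset.mem_univ x, hxT,
          htrans _ _ _ hxr hrq, ?_⟩⟩
        rintro rfl
        exact hxner (hanti _ _ hrq hxr).symm
      have hrmem : r ∈ Finset.univ.filter (fun x => x ∈ T ∧ lt x q ∧ x ≠ q) :=
        Finset.mem_filter.2 ⟨Finset.mem_univ r, hrT, hrq, hrne⟩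
      have hlt : (Finset.univ.filter (fun x => x ∈ T ∧ lt x r ∧ x ≠ r)).card ≤ n := by
        have := Finset.card_le_card hsub
        have h2 := Finset.card_erase_of_mem hrmem
        omega
      obtain ⟨p, hpT, hpr, hpmin⟩ := ih r hrT hlt
      refine ⟨p, hpT, ?_, hpmin⟩
      rcases hpr with h | rfl
      · exact Or.inl (htrans _ _ _ h hrq)
      · exact Or.inl hrq

/-- finiteness of `A ∩ Xp p` for minimal `p` with `¬ lt p p`. -/
lemma finite_inter_of_minimal
    {Xp : P → Set X}
    (hdisj : Pairwise (Function.onFun Disjoint Xp))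
    (hderiv : ∀ p, derivedSet (Xp p) = ⋃ q ∈ {q | lt q p}, Xp q)
    {A : Set X} (hAc : IsCompact A)
    {p : P} (hmin : ∀ q ∈ typeOf Xp A, lt q p → q = p) (hpp : ¬ lt p p) :
    (A ∩ Xp p).Finite := by
  by_contra hinf
  rw [← Set.not_infinite, not_not] at hinf
  obtain ⟨x, hxA, hacc⟩ :=
    hinf.exists_accPt_of_subset_isCompact hAc Set.inter_subset_left
  have hacc' : AccPt x (Filter.principal (Xp p)) :=
    hacc.mono (Filter.principal_mono.2 Set.inter_subset_right)
  have hx : x ∈ derivedSet (Xp p) := hacc'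
  rw [hderiv p] at hx
  obtain ⟨q, hq, hxq⟩ := Set.mem_iUnion₂.1 hx
  have hqT : q ∈ typeOf Xp A := ⟨x, hxA, hxq⟩
  exact hpp (hmin q hqT hq ▸ hq)
end Aux3

section Aux4
variable {X : Type*} [TopologicalSpace X] [T2Space X]

/-- disjointify a finite family of compact open sets. -/
lemma exists_disjointify (s : Finset X) (f : X → Set X)
    (hfc : ∀ x ∈ s, IsCompact (f x)) (hfo : ∀ x ∈ s, IsOpen (f x)) :
    ∃ g : X → Set X, (∀ x, g x ⊆ f x) ∧ (∀ x ∈ s, IsCompact (g x)) ∧ (∀ x ∈ s, IsOpen (g x)) ∧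
      (∀ x ∈ s, ∀ y ∈ s, x ≠ y → Disjoint (g x) (g y)) ∧
      (⋃ x ∈ s, g x = ⋃ x ∈ s, f x) ∧
      (∀ x ∈ s, ∀ z ∈ f x, (∀ y ∈ s, y ≠ x → z ∉ f y) → z ∈ g x) := by
  classical
  set r : X → X → Prop := WellOrderingRel with hr
  have hwf : WellFounded (r : X → X → Prop) := (WellOrderingRel.isWellOrder).wf
  set g : X → Set X := fun x => f x \ ⋃ y ∈ s.filter (fun y => r y x), f y with hg
  have hgsub : ∀ x, g x ⊆ f x := fun x => Set.diff_subset
  refine ⟨g, hgsub, ?_, ?_, ?_, ?_, ?_⟩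
  · -- compact
    intro x hx
    have : g x = f x ∩ (⋃ y ∈ s.filter (fun y => r y x), f y)ᶜ := rfl
    rw [this]
    refine (hfc x hx).of_isClosed_subset (IsClosed.inter (hfc x hx).isClosed ?_)
      Set.inter_subset_left
    exact (isOpen_biUnion fun y hy => hfo y (Finset.mem_filter.1 hy).1).isClosed_compl
  · -- open
    intro x hx
    have : g x = f x ∩ (⋃ y ∈ s.filter (fun y => r y x), f y)ᶜ := rfl
    rw [this]
    have hcl : IsClosed (⋃ y ∈ s.filter (fun y => r y x), f y) :=
      ((s.filter (fun y => r y x)).isCompact_biUnion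
        (fun y hy => hfc y (Finset.mem_filter.1 hy).1)).isClosed
    exact (hfo x hx).inter hcl.isOpen_compl
  · -- disjoint
    intro x hx y hy hxy
    have key : ∀ a b : X, a ∈ s → b ∈ s → r a b → Disjoint (g a) (g b) := by
      intro a b ha hb hab
      rw [Set.disjoint_left]
      intro z hza hzb
      exact hzb.2 (Set.mem_biUnion (Finset.mem_filter.2 ⟨ha, hab⟩) (hgsub a hza))
    rcases trichotomous_of r x y with h | h | h
    · exact key x y hx hy h
    · exact absurd h hxy
    · exact (key y x hy hx h).symm
  · -- union
    refine Set.Subset.antisymm (Set.iUnion₂_mono fun x _ => hgsub x) ?_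
    intro z hz
    obtain ⟨x, hx, hzx⟩ := Set.mem_iUnion₂.1 hz
    have hne : {a : X | a ∈ s ∧ z ∈ f a}.Nonempty := ⟨x, hx, hzx⟩
    obtain ⟨m, hm, hmmin⟩ := hwf.has_min _ hne
    refine Set.mem_biUnion hm.1 ?_
    refine ⟨hm.2, ?_⟩
    intro hmem
    obtain ⟨y, hy, hzy⟩ := Set.mem_iUnion₂.1 hmem
    obtain ⟨hys, hyr⟩ := Finset.mem_filter.1 hy
    exact hmmin y ⟨hys, hzy⟩ hyr
  · -- membership
    intro x hx z hz hz2
    refine ⟨hz, ?_⟩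
    intro hmem
    obtain ⟨y, hy, hzy⟩ := Set.mem_iUnion₂.1 hmem
    obtain ⟨hys, hyr⟩ := Finset.mem_filter.1 hy
    have : y ≠ x := fun h => (Std.Irrefl.irrefl (r := r) x) (h ▸ hyr)
    exact hz2 y hys this hzy

end Aux4

/-- For a complete `P`-partition of the Stone space of a Boolean ring, `P` a finite PO
system: every nonempty compact open `A` admits a `μ(A)`-partition, i.e. a partition into
disjoint trim sets containing exactly one `p`-trim set for each minimal `p ∈ T(A)` with
`p < p`, and exactly `|A ∩ X_p|` `p`-trim sets for each minimal `p ∈ T(A)` with `p ≮ p`. -/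
theorem exists_mu_partition
    {X P : Type*} [TopologicalSpace X] [LocallyCompactSpace X] [T2Space X]
    [TotallyDisconnectedSpace X] [SecondCountableTopology X] [Fintype P]
    (lt : P → P → Prop)
    (htrans : ∀ a b c, lt a b → lt b c → lt a c)
    (hanti : ∀ a b, lt a b → lt b a → a = b)
    (Xp : P → Set X)
    (hnonempty : ∀ p, (Xp p).Nonempty)
    (hdisj : Pairwise (Function.onFun Disjoint Xp))
    (hcover : (⋃ p, Xp p) = Set.univ)
    (hderiv : ∀ p, derivedSet (Xp p) = ⋃ q ∈ {q | lt q p}, Xp q)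
    (A : Set X) (hAc : IsCompact A) (hAo : IsOpen A) (hAne : A.Nonempty) :
    ∃ 𝒞 : Finset (Set X),
      ((𝒞 : Set (Set X)).PairwiseDisjoint id) ∧
      (⋃₀ (𝒞 : Set (Set X)) = A) ∧
      (∀ B ∈ 𝒞, ∃ p, IsTrim lt Xp p B) ∧
      (∀ p : P, p ∈ typeOf Xp A → (∀ q ∈ typeOf Xp A, lt q p → q = p) →
        ((lt p p → (𝒞.filter (fun B => IsTrim lt Xp p B)).card = 1) ∧
         (¬ lt p p → (𝒞.filter (fun B => IsTrim lt Xp p B)).card = (A ∩ Xp p).ncard))) := by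
  classical
  set T : Set P := typeOf Xp A with hT
  -- the partition map
  have hπex : ∀ x : X, ∃ p, x ∈ Xp p := by
    intro x
    have : x ∈ ⋃ p, Xp p := by rw [hcover]; trivial
    exact Set.mem_iUnion.1 this
  choose π hπ using hπex
  have πeq : ∀ {x : X} {p : P}, x ∈ Xp p → π x = p := by
    intro x p hx
    by_contra hne
    exact Set.disjoint_left.1 (hdisj hne) (hπ x) hx
  -- notation for upper sets
  set Ss : P → Set P := fun p => {q | lt p q ∨ q = p} with hSs
  have hSsmono : ∀ {p q : P}, (lt p q ∨ p = q) → Ss q ⊆ Ss p := by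
    rintro p q (hpq | rfl) r (hqr | rfl)
    · exact Or.inl (htrans _ _ _ hpq hqr)
    · exact Or.inl hpq
    · exact Or.inl hqr
    · exact Or.inr rfl
  have hSsself : ∀ p, p ∈ Ss p := fun p => Or.inr rfl
  have hSsinj : ∀ {p q : P}, Ss p = Ss q → p = q := by
    intro p q h
    have h1 : p ∈ Ss q := h ▸ hSsself p
    have h2 : q ∈ Ss p := h.symm ▸ hSsself q
    rcases h1 with h1 | h1
    · rcases h2 with h2 | h2
      · exact hanti _ _ h2 h1
      · exact h2.symm
    · exact h1
  -- minimal element selector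
  have hmnex : ∀ q : P, ∃ p, q ∈ T →
      (p ∈ T ∧ (lt p q ∨ p = q) ∧ ∀ r ∈ T, lt r p → r = p) := by
    intro q
    by_cases hq : q ∈ T
    · obtain ⟨p, h⟩ := exists_minimal_below lt htrans hanti T q hq
      exact ⟨p, fun _ => h⟩
    · exact ⟨q, fun h => absurd h hq⟩
  choose mn hmn using hmnex
  -- minimal elements
  set F : Set P := {p | p ∈ T ∧ ∀ r ∈ T, lt r p → r = p} with hF
  -- seeds for each minimal p
  have seedFex : ∀ p : P, ∃ s : Finset X, p ∈ F →
      ((↑s : Set X) ⊆ A ∩ Xp p ∧ s.Nonempty ∧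
       (¬ lt p p → (↑s : Set X) = A ∩ Xp p) ∧ (lt p p → s.card = 1)) := by
    intro p
    by_cases hp : p ∈ F
    · by_cases hpp : lt p p
      · obtain ⟨x, hx⟩ := hp.1
        refine ⟨{x}, fun _ => ⟨by simpa using hx, ⟨x, Finset.mem_singleton_self x⟩,
          fun h => absurd hpp h, fun _ => Finset.card_singleton x⟩⟩
      · have hfin : (A ∩ Xp p).Finite :=
          finite_inter_of_minimal lt hdisj hderiv hAc hp.2 hpp
        refine ⟨hfin.toFinset, fun _ => ⟨by simp, ?_, fun _ => by simp, fun h => absurd h hpp⟩⟩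
        obtain ⟨x, hx⟩ := hp.1
        exact ⟨x, hfin.mem_toFinset.2 hx⟩
    · exact ⟨∅, fun h => absurd h hp⟩
  choose seedF hseedF using seedFex
  set Fs : Finset P := Finset.univ.filter (fun p => p ∈ F) with hFs
  have hFsmem : ∀ p : P, p ∈ Fs ↔ p ∈ F := by
    intro p; simp [hFs]
  set seeds : Finset X := Fs.biUnion seedF with hseeds
  have hseedmem : ∀ x ∈ seeds, ∃ p ∈ F, x ∈ seedF p := by
    intro x hx
    obtain ⟨p, hp, hxp⟩ := Finset.mem_biUnion.1 hx
    exact ⟨p, (hFsmem p).1 hp, hxp⟩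
  have hseedπ : ∀ {p : P}, p ∈ F → ∀ {x : X}, x ∈ seedF p → π x = p ∧ x ∈ A := by
    intro p hp x hx
    have := (hseedF p hp).1 hx
    exact ⟨πeq this.2, this.1⟩
  have hseedA : ∀ x ∈ seeds, x ∈ A := by
    intro x hx
    obtain ⟨p, hp, hxp⟩ := hseedmem x hx
    exact (hseedπ hp hxp).2
  have hseedπF : ∀ x ∈ seeds, π x ∈ F ∧ x ∈ seedF (π x) := by
    intro x hx
    obtain ⟨p, hp, hxp⟩ := hseedmem x hx
    have := (hseedπ hp hxp).1
    exact this ▸ ⟨hp, hxp⟩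
  -- trim sets around seeds, avoiding other seeds
  have hBex : ∀ x ∈ seeds, ∃ B : Set X, IsCompact B ∧ IsOpen B ∧ x ∈ B ∧
      B ⊆ A ∩ (↑(seeds.erase x) : Set X)ᶜ ∧ typeOf Xp B = Ss (π x) ∧
      (¬ lt (π x) (π x) → B ∩ Xp (π x) ⊆ {x}) := by
    intro x hx
    have hW : IsOpen ((↑(seeds.erase x) : Set X)ᶜ) :=
      (Set.Finite.isClosed (seeds.erase x).finite_toSet).isOpen_compl
    have hxW : x ∈ ((↑(seeds.erase x) : Set X)ᶜ) := by
      simp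
    exact exists_trim_nbhd lt Xp hdisj hderiv (hπ x) hAo (hseedA x hx) hW hxW
  choose! Bf hBfc hBfo hBfx hBfsub hBftype hBfsingle using hBex
  -- disjointify the B's
  obtain ⟨G, hGsub, hGc, hGo, hGdisj, hGunion, hGmem⟩ :=
    exists_disjointify seeds Bf hBfc hBfo
  have hGx : ∀ x ∈ seeds, x ∈ G x := by
    intro x hx
    refine hGmem x hx x (hBfx x hx) ?_
    intro y hy hyx hmem
    have h2 := (hBfsub y hy hmem).2
    have : x ∈ (↑(seeds.erase y) : Set X) := by
      simp only [Finset.coe_erase, Set.mem_diff, Set.mem_singleton_iff]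
      exact ⟨hx, fun h => hyx h.symm⟩
    exact h2 this
  -- G properties
  have hGtype : ∀ x ∈ seeds, typeOf Xp (G x) = Ss (π x) := by
    intro x hx
    refine Set.Subset.antisymm ?_ ?_
    · exact (typeOf_mono (hGsub x)).trans (hBftype x hx).le
    · exact up_subset_typeOf lt Xp hderiv (hπ x) (hGo x hx) (hGx x hx)
  set UB : Set X := ⋃ x ∈ seeds, Bf x with hUB
  have hUBo : IsOpen UB := isOpen_biUnion (fun x hx => hBfo x hx)
  have hUBc : IsCompact UB := seeds.isCompact_biUnion (fun x hx => hBfc x hx)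
  have hUBA : UB ⊆ A := Set.iUnion₂_subset fun x hx z hz => (hBfsub x hx hz).1
  set C : Set X := A \ UB with hC
  have hCc : IsCompact C := by
    rw [hC, Set.diff_eq]
    exact hAc.inter_right hUBo.isClosed_compl
  have hCo : IsOpen C := hAo.sdiff hUBc.isClosed
  have hCXp : ∀ p ∈ F, ¬ lt p p → C ∩ Xp p = ∅ := by
    intro p hp hpp
    rw [Set.eq_empty_iff_forall_notMem]
    rintro z ⟨hzC, hzp⟩
    have hzseedF : z ∈ seedF p := by
      have := (hseedF p hp).2.2.1 hpp
      have hz : z ∈ (↑(seedF p) : Set X) := this ▸ ⟨hzC.1, hzp⟩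
      exact_mod_cast hz
    have hzseeds : z ∈ seeds :=
      Finset.mem_biUnion.2 ⟨p, (hFsmem p).2 hp, hzseedF⟩
    exact hzC.2 (Set.mem_biUnion hzseeds (hBfx z hzseeds))
  -- cover the remainder C
  have hVex : ∀ y ∈ C, ∃ V : Set X, IsCompact V ∧ IsOpen V ∧ y ∈ V ∧ V ⊆ C ∧
      typeOf Xp V ⊆ Ss (mn (π y)) := by
    intro y hy
    have hπT : π y ∈ T := ⟨y, hy.1, hπ y⟩
    obtain ⟨hmnT, hmnle, hmnmin⟩ := hmn (π y) hπT
    obtain ⟨B, hBc', hBo', hyB, hBsub, hBtype, -⟩ :=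
      exists_trim_nbhd lt Xp hdisj hderiv (hπ y) hCo hy isOpen_univ trivial
    exact ⟨B, hBc', hBo', hyB, fun z hz => (hBsub hz).1, hBtype ▸ hSsmono hmnle⟩
  choose! Vf hVc hVo hVmem hVsub hVtype using hVex
  obtain ⟨t, htC, hCcover⟩ :=
    hCc.elim_nhds_subcover Vf (fun y hy => (hVo y hy).mem_nhds (hVmem y hy))
  obtain ⟨D, hDsub, hDc, hDo, hDdisj, hDunion, -⟩ :=
    exists_disjointify t Vf (fun y hy => hVc y (htC y hy)) (fun y hy => hVo y (htC y hy))
  have hDC : ∀ y ∈ t, D y ⊆ C := fun y hy => (hDsub y).trans (hVsub y (htC y hy))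
  have hDunionC : ⋃ y ∈ t, D y = C := by
    rw [hDunion]
    refine Set.Subset.antisymm (Set.iUnion₂_subset fun y hy => hVsub y (htC y hy)) hCcover
  have hDtype : ∀ y ∈ t, typeOf Xp (D y) ⊆ Ss (mn (π y)) :=
    fun y hy => (typeOf_mono (hDsub y)).trans (hVtype y (htC y hy))
  -- designated seed for each minimal element
  have hsdex : ∀ p : P, ∃ x : X, p ∈ F → (x ∈ seedF p ∧ π x = p ∧ x ∈ seeds) := by
    intro p
    by_cases hp : p ∈ F
    · obtain ⟨x, hx⟩ := (hseedF p hp).2.1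
      exact ⟨x, fun _ => ⟨hx, (hseedπ hp hx).1,
        Finset.mem_biUnion.2 ⟨p, (hFsmem p).2 hp, hx⟩⟩⟩
    · exact ⟨hAne.choose, fun h => absurd h hp⟩
  choose sd hsd using hsdex
  set tgt : X → X := fun y => sd (mn (π y)) with htgt
  have htgtF : ∀ y ∈ t, mn (π y) ∈ F ∧ π (tgt y) = mn (π y) ∧ tgt y ∈ seeds := by
    intro y hy
    have hyC : y ∈ C := htC y hy
    have hπT : π y ∈ T := ⟨y, hyC.1, hπ y⟩
    obtain ⟨hmnT, hmnle, hmnmin⟩ := hmn (π y) hπT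
    have hmnF : mn (π y) ∈ F := ⟨hmnT, hmnmin⟩
    obtain ⟨h1, h2, h3⟩ := hsd (mn (π y)) hmnF
    exact ⟨hmnF, h2, h3⟩
  -- the final family
  set E : X → Set X := fun x => G x ∪ ⋃ y ∈ t.filter (fun y => tgt y = x), D y with hE
  have hGE : ∀ x, G x ⊆ E x := fun x => Set.subset_union_left
  have hEmem : ∀ x ∈ seeds, x ∈ E x := fun x hx => hGE x (hGx x hx)
  have hEcases : ∀ {x : X} {z : X}, z ∈ E x →
      z ∈ G x ∨ ∃ y ∈ t, tgt y = x ∧ z ∈ D y := by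
    intro x z hz
    rcases hz with hz | hz
    · exact Or.inl hz
    · obtain ⟨y, hy, hzy⟩ := Set.mem_iUnion₂.1 hz
      obtain ⟨hyt, hytgt⟩ := Finset.mem_filter.1 hy
      exact Or.inr ⟨y, hyt, hytgt, hzy⟩
  have hEc : ∀ x ∈ seeds, IsCompact (E x) := by
    intro x hx
    exact (hGc x hx).union ((t.filter (fun y => tgt y = x)).isCompact_biUnion
      (fun y hy => hDc y (Finset.mem_filter.1 hy).1))
  have hEo : ∀ x ∈ seeds, IsOpen (E x) := by
    intro x hx
    exact (hGo x hx).union (isOpen_biUnion (fun y hy => hDo y (Finset.mem_filter.1 hy).1))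
  have hEtype : ∀ x ∈ seeds, typeOf Xp (E x) = Ss (π x) := by
    intro x hx
    refine Set.Subset.antisymm ?_ ?_
    · rintro r ⟨z, hz1, hz2⟩
      rcases hEcases hz1 with hz | ⟨y, hyt, hytgt, hzy⟩
      · exact (hGtype x hx) ▸ ⟨z, hz, hz2⟩
      · have h1 := hDtype y hyt ⟨z, hzy, hz2⟩
        have h2 := (htgtF y hyt).2.1
        rw [hytgt] at h2
        rw [h2]
        exact h1
    · exact (hGtype x hx) ▸ typeOf_mono (hGE x)
  have hEsingle : ∀ x ∈ seeds, ¬ lt (π x) (π x) → ∃! z, z ∈ E x ∩ Xp (π x) := by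
    intro x hx hpp
    refine ⟨x, ⟨hEmem x hx, hπ x⟩, ?_⟩
    rintro z ⟨hz1, hz2⟩
    rcases hEcases hz1 with hz | ⟨y, hyt, hytgt, hzy⟩
    · exact hBfsingle x hx hpp ⟨hGsub x hz, hz2⟩
    · have hzC : z ∈ C := hDC y hyt hzy
      have hπF := (hseedπF x hx).1
      have := hCXp (π x) hπF hpp
      exact absurd (Set.eq_empty_iff_forall_notMem.1 this z ⟨hzC, hz2⟩) (fun h => h)
  have hEtrim : ∀ x ∈ seeds, IsTrim lt Xp (π x) (E x) := by
    intro x hx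
    exact ⟨hEc x hx, hEo x hx, hEtype x hx, hEsingle x hx⟩
  have hEA : ∀ x ∈ seeds, E x ⊆ A := by
    intro x hx z hz
    rcases hEcases hz with hz | ⟨y, hyt, hytgt, hzy⟩
    · exact (hBfsub x hx (hGsub x hz)).1
    · exact (hDC y hyt hzy).1
  have hEdisj : ∀ x ∈ seeds, ∀ x' ∈ seeds, x ≠ x' → Disjoint (E x) (E x') := by
    intro x hx x' hx' hne
    rw [Set.disjoint_left]
    intro z hz hz'
    rcases hEcases hz with h1 | ⟨y, hyt, hytgt, hzy⟩ <;>
      rcases hEcases hz' with h2 | ⟨y', hyt', hytgt', hzy'⟩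
    · exact Set.disjoint_left.1 (hGdisj x hx x' hx' hne) h1 h2
    · exact (hDC y' hyt' hzy').2 (Set.mem_biUnion hx (hGsub x h1))
    · exact (hDC y hyt hzy).2 (Set.mem_biUnion hx' (hGsub x' h2))
    · by_cases hyy : y = y'
      · subst hyy
        exact hne (hytgt.symm.trans hytgt')
      · exact Set.disjoint_left.1 (hDdisj y hyt y' hyt' hyy) hzy hzy'
  have hEunion : ⋃ x ∈ seeds, E x = A := by
    refine Set.Subset.antisymm (Set.iUnion₂_subset hEA) ?_
    intro z hz
    by_cases hzUB : z ∈ UB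
    · rw [← hGunion] at hzUB
      obtain ⟨x, hx, hzx⟩ := Set.mem_iUnion₂.1 hzUB
      exact Set.mem_biUnion hx (hGE x hzx)
    · have hzC : z ∈ C := ⟨hz, hzUB⟩
      rw [← hDunionC] at hzC
      obtain ⟨y, hy, hzy⟩ := Set.mem_iUnion₂.1 hzC
      refine Set.mem_biUnion (htgtF y hy).2.2 ?_
      refine Set.mem_union_right _ (Set.mem_biUnion ?_ hzy)
      exact Finset.mem_filter.2 ⟨hy, rfl⟩
  have hEinj : Set.InjOn E (↑seeds : Set X) := by
    intro x hx x' hx' heq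
    by_contra hne
    have hd := hEdisj x hx x' hx' hne
    have : x ∈ E x' := heq ▸ hEmem x hx
    exact Set.disjoint_left.1 hd (hEmem x hx) this
  refine ⟨seeds.image E, ?_, ?_, ?_, ?_⟩
  · -- pairwise disjoint
    intro B1 h1 B2 h2 hne
    simp only [Finset.coe_image, Set.mem_image, Finset.mem_coe] at h1 h2
    obtain ⟨x, hx, rfl⟩ := h1
    obtain ⟨x', hx', rfl⟩ := h2
    have hxx : x ≠ x' := fun h => hne (h ▸ rfl)
    exact hEdisj x hx x' hx' hxx
  · -- union
    rw [Finset.coe_image, Set.sUnion_image]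
    exact hEunion
  · -- trim
    intro B hB
    obtain ⟨x, hx, rfl⟩ := Finset.mem_image.1 hB
    exact ⟨π x, hEtrim x hx⟩
  · -- counting
    intro p hpT hpmin
    have hpF : p ∈ F := ⟨hpT, hpmin⟩
    have hseedsub : seedF p ⊆ seeds := by
      intro x hx
      exact Finset.mem_biUnion.2 ⟨p, (hFsmem p).2 hpF, hx⟩
    have hfilter : (seeds.image E).filter (fun B => IsTrim lt Xp p B) = (seedF p).image E := by
      ext B
      simp only [Finset.mem_filter, Finset.mem_image]
      constructor
      · rintro ⟨⟨x, hx, rfl⟩, htr⟩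
        have h1 : typeOf Xp (E x) = Ss p := htr.2.2.1
        have h2 : typeOf Xp (E x) = Ss (π x) := hEtype x hx
        have hpx : p = π x := hSsinj (h1 ▸ h2)
        refine ⟨x, ?_, rfl⟩
        rw [hpx]
        exact (hseedπF x hx).2
      · rintro ⟨x, hx, rfl⟩
        have hxseeds : x ∈ seeds := hseedsub hx
        have hπx : π x = p := (hseedπ hpF hx).1
        exact ⟨⟨x, hxseeds, rfl⟩, hπx ▸ hEtrim x hxseeds⟩
    rw [hfilter]
    have hcard : ((seedF p).image E).card = (seedF p).card :=
      Finset.card_image_of_injOn (fun x hx x' hx' h =>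
        hEinj (hseedsub hx) (hseedsub hx') h)
    constructor
    · intro hpp
      rw [hcard]
      exact (hseedF p hpF).2.2.2 hpp
    · intro hpp
      rw [hcard]
      have := (hseedF p hpF).2.2.1 hpp
      rw [← this, Set.ncard_coe_finset]
end

section
/- Let W be a second countable Stone space (locally compact, Hausdorff, totally disconnected) and C a nonempty closed subset of W. Let D be the Cantor set, x₀ ∈ D, and X = (W × {x₀}) ∪ (C × D) ⊆ W × D. Then X is closed in W × D, the map α : W → X, y ↦ (y, x₀) is a homeomorphism onto the closed subset W × {x₀} of X, and setting Y = X \ (W × {x₀}), one has that the closure of Y in X equals C × D, the closure of Y meets W × {x₀} exactly in C × {x₀}, and Y has no isolated points. -/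
open Filter Topology

/-- Every point of the Cantor space `ℕ → Bool` is a non-isolated point. -/
lemma cantor_punctured_nhds_neBot (x : ℕ → Bool) : Filter.NeBot (𝓝[≠] x) := by
  rw [← mem_closure_iff_nhdsWithin_neBot]
  have htend : Tendsto (fun n : ℕ => Function.update x n (!x n)) atTop (𝓝 x) := by
    rw [tendsto_pi_nhds]
    intro k
    apply Tendsto.congr' (f₁ := fun _ => x k) _ tendsto_const_nhds
    filter_upwards [eventually_gt_atTop k] with n hn
    simp [Function.update_of_ne (Nat.ne_of_gt hn).symm]
  refine mem_closure_of_tendsto htend (Eventually.of_forall fun n => ?_)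
  intro h
  have := congrFun (Set.mem_singleton_iff.mp h) n
  simp at this

/-- Pierce's extension lemma, crowded case (with Cantor set `D = ℕ → Bool`):
given a second countable Stone space `W`, a nonempty closed `C ⊆ W` and `x₀ ∈ D`, set
`X = (W × {x₀}) ∪ (C × D)`. Then `X` is closed in `W × D`, `α : y ↦ (y, x₀)` is a
homeomorphism onto the closed subset `W × {x₀}` of `X`, and `Y = X \ (W × {x₀})`
satisfies: `closure Y = C × D`, `closure Y ∩ (W × {x₀}) = C × {x₀}`, and `Y` has no
isolated points. -/
theorem pierce_lemma_crowded_case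
    {W : Type*} [TopologicalSpace W] [LocallyCompactSpace W] [T2Space W]
    [TotallyDisconnectedSpace W] [SecondCountableTopology W]
    (C : Set W) (hCcl : IsClosed C) (hCne : C.Nonempty) (x₀ : ℕ → Bool) :
    ∀ Xs Y : Set (W × (ℕ → Bool)),
      Xs = (Set.univ ×ˢ ({x₀} : Set (ℕ → Bool))) ∪ (C ×ˢ Set.univ) →
      Y = Xs \ (Set.univ ×ˢ ({x₀} : Set (ℕ → Bool))) →
      IsClosed Xs ∧
      Topology.IsClosedEmbedding (fun y : W => (y, x₀)) ∧
      Set.range (fun y : W => (y, x₀)) = Set.univ ×ˢ ({x₀} : Set (ℕ → Bool)) ∧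
      closure Y = C ×ˢ (Set.univ : Set (ℕ → Bool)) ∧
      closure Y ∩ (Set.univ ×ˢ ({x₀} : Set (ℕ → Bool))) = C ×ˢ ({x₀} : Set (ℕ → Bool)) ∧
      Y ⊆ derivedSet Y := by
  intro Xs Y hXs hY
  haveI := cantor_punctured_nhds_neBot x₀
  have hrange : Set.range (fun y : W => (y, x₀)) = Set.univ ×ˢ ({x₀} : Set (ℕ → Bool)) := by
    ext ⟨a, b⟩
    simp [eq_comm]
  have hemb : Topology.IsEmbedding (fun y : W => (y, x₀)) :=
    (Homeomorph.prodComm (ℕ → Bool) W).isEmbedding.comp (isEmbedding_prodMkRight x₀)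
  have hclemb : Topology.IsClosedEmbedding (fun y : W => (y, x₀)) :=
    ⟨hemb, by rw [hrange]; exact isClosed_univ.prod isClosed_singleton⟩
  have hYeq : Y = C ×ˢ ({x₀}ᶜ : Set (ℕ → Bool)) := by
    rw [hY, hXs]
    ext ⟨a, b⟩
    simp only [Set.mem_diff, Set.mem_union, Set.mem_prod, Set.mem_univ, Set.mem_singleton_iff,
      Set.mem_compl_iff, true_and, and_true]
    tauto
  have hclY : closure Y = C ×ˢ (Set.univ : Set (ℕ → Bool)) := by
    rw [hYeq, closure_prod_eq, hCcl.closure_eq, (dense_compl_singleton x₀).closure_eq]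
  refine ⟨?_, hclemb, hrange, hclY, ?_, ?_⟩
  · rw [hXs]
    exact (isClosed_univ.prod isClosed_singleton).union (hCcl.prod isClosed_univ)
  · rw [hclY, Set.prod_inter_prod, Set.univ_inter, Set.inter_univ]
  · intro p hp
    rw [hYeq] at hp
    obtain ⟨hpC, hpx⟩ := hp
    rw [mem_derivedSet, accPt_iff_nhds]
    intro U hU
    rw [mem_nhds_prod_iff] at hU
    obtain ⟨V, hV, T, hT, hVT⟩ := hU
    haveI := cantor_punctured_nhds_neBot p.2
    have hmem : (T ∩ {x₀}ᶜ) ∩ {p.2}ᶜ ∈ 𝓝[≠] p.2 := by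
      exact Filter.inter_mem (nhdsWithin_le_nhds
        (Filter.inter_mem hT (isOpen_compl_singleton.mem_nhds hpx))) self_mem_nhdsWithin
    obtain ⟨y, ⟨hyT, hyx₀⟩, hyp⟩ := Filter.nonempty_of_mem hmem
    refine ⟨(p.1, y), ⟨hVT ⟨mem_of_mem_nhds hV, hyT⟩, ?_⟩, ?_⟩
    · rw [hYeq]; exact ⟨hpC, hyx₀⟩
    · intro h
      exact hyp (congrArg Prod.snd h)
end

section
/- Let X be a topological space, C_1, ..., C_n closed subsets of X, and suppose the closure subalgebra C of the powerset of X generated by {C_1,...,C_n} (together with X) is finite and each atom of C has finitely many isolated points of X within it whose set of limit points is empty, satisfying (A^d)' = ∅ for each atom A. Then the sub-TBA D of 2^X generated by {C_1,...,C_n} is finite, and every atom of D is either contained in its own derived set (crowded) or disjoint from its derived set. -/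
/-- `C` is a Boolean subalgebra of the powerset of `X` (as a collection of sets). -/
def IsBoolSubalgOfSets {X : Type*} (C : Set (Set X)) : Prop :=
  Set.univ ∈ C ∧ (∀ A ∈ C, Aᶜ ∈ C) ∧ ∀ A B : Set X, A ∈ C → B ∈ C → A ∪ B ∈ C

/-- `A` is an atom of the collection `C` of subsets of `X`. -/
def IsAtomOfSets {X : Type*} (C : Set (Set X)) (A : Set X) : Prop :=
  A ∈ C ∧ A ≠ ∅ ∧ ∀ B ∈ C, B ⊆ A → B = ∅ ∨ B = A

section Aux

variable {X : Type*} [TopologicalSpace X]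

lemma aux_closure_eq_union_derivedSet (A : Set X) :
    closure A = A ∪ derivedSet A := by
  apply Set.Subset.antisymm
  · intro x hx
    by_cases hxA : x ∈ A
    · exact Or.inl hxA
    · refine Or.inr ?_
      rw [mem_derivedSet, accPt_principal_iff_clusterPt]
      have : A \ {x} = A := by
        ext y; simp only [Set.mem_diff, Set.mem_singleton_iff]
        constructor
        · exact fun h => h.1
        · intro hy; exact ⟨hy, fun h => hxA (h ▸ hy)⟩
      rw [this]
      exact mem_closure_iff_clusterPt.mp hx
  · exact Set.union_subset subset_closure (derivedSet_subset_closure A)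

lemma aux_derivedSet_empty : derivedSet (∅ : Set X) = ∅ := by
  rw [Set.eq_empty_iff_forall_notMem]
  intro x hx
  rw [mem_derivedSet, accPt_principal_iff_clusterPt, Set.empty_diff,
    Filter.principal_empty, ClusterPt, inf_bot_eq] at hx
  exact hx.ne rfl

/-- derived set of a finite union of sets with empty derived set is empty -/
lemma aux_derivedSet_sUnion {S : Set (Set X)} (hS : S.Finite)
    (h : ∀ s ∈ S, derivedSet s = ∅) : derivedSet (⋃₀ S) = ∅ := by
  refine Set.Finite.induction_on
    (motive := fun S _ => (∀ s ∈ S, derivedSet s = ∅) → derivedSet (⋃₀ S) = ∅) S hS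
    (fun _ => by simpa using aux_derivedSet_empty) ?_ h
  intro a s _ _ ih h
  rw [Set.sUnion_insert, derivedSet_union, h a (Set.mem_insert a s),
    ih fun t ht => h t (Set.mem_insert_of_mem a ht)]
  simp

end Aux

section BA

variable {X : Type*} {C : Set (Set X)}

lemma aux_empty_mem (hC : IsBoolSubalgOfSets C) : (∅ : Set X) ∈ C := by
  have := hC.2.1 _ hC.1
  simpa using this

lemma aux_inter_mem (hC : IsBoolSubalgOfSets C) {A B : Set X} (hA : A ∈ C) (hB : B ∈ C) : A ∩ B ∈ C := by
  have := hC.2.1 _ (hC.2.2 _ _ (hC.2.1 _ hA) (hC.2.1 _ hB))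
  simpa [Set.compl_union] using this

lemma aux_diff_mem (hC : IsBoolSubalgOfSets C) {A B : Set X} (hA : A ∈ C) (hB : B ∈ C) : A \ B ∈ C := by
  have := aux_inter_mem hC hA (hC.2.1 _ hB)
  simpa [Set.diff_eq] using this

lemma aux_sInter_mem (hC : IsBoolSubalgOfSets C) {S : Set (Set X)} (hS : S.Finite) (h : S ⊆ C) : ⋂₀ S ∈ C := by
  refine Set.Finite.induction_on (motive := fun S _ => S ⊆ C → ⋂₀ S ∈ C) S hS
    (fun _ => by simpa using hC.1) ?_ h
  intro a s _ _ ih h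
  rw [Set.sInter_insert]
  exact aux_inter_mem hC (h (Set.mem_insert a s))
    (ih fun t ht => h (Set.mem_insert_of_mem a ht))

/-- Every point of a member of a finite Boolean algebra of sets lies in an atom
contained in that member. -/
lemma aux_atom_through_point (hC : IsBoolSubalgOfSets C) (hfin : C.Finite) {S : Set X} (hS : S ∈ C) {x : X}
    (hx : x ∈ S) : ∃ A : Set X, IsAtomOfSets C A ∧ x ∈ A ∧ A ⊆ S := by
  classical
  set T : Set (Set X) := {B ∈ C | x ∈ B} with hT
  set A : Set X := ⋂₀ T with hA
  have hTfin : T.Finite := hfin.subset fun B hB => hB.1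
  have hAC : A ∈ C := aux_sInter_mem hC hTfin fun B hB => hB.1
  have hxA : x ∈ A := fun B hB => hB.2
  have hmin : ∀ B ∈ C, x ∈ B → A ⊆ B := fun B hB hxB =>
    Set.sInter_subset_of_mem ⟨hB, hxB⟩
  refine ⟨A, ⟨hAC, ?_, ?_⟩, hxA, hmin S hS hx⟩
  · intro h; rw [h] at hxA; exact hxA
  · intro B hB hBA
    by_cases hxB : x ∈ B
    · exact Or.inr (Set.Subset.antisymm hBA (hmin B hB hxB))
    · left
      have hAB : A ⊆ A \ B := hmin _ (aux_diff_mem hC hAC hB) ⟨hxA, hxB⟩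
      rw [Set.eq_empty_iff_forall_notMem]
      intro y hy
      exact (hAB (hBA hy)).2 hy

end BA

/-- If `C₁, …, Cₙ` are closed subsets of `X` whose generated closure subalgebra `C` is
finite, and each atom `A` of `C` has finitely many isolated points with
`(A^d)' = ∅`, then the sub-TBA `D` of `2^X` generated by the `Cᵢ` is finite and every
atom of `D` is either crowded or disjoint from its derived set. -/
theorem subTBA_of_closed_sets_finite_and_atoms_dichotomy
    {X : Type*} [TopologicalSpace X] {n : ℕ} (Cs : Fin n → Set X)
    (hclosed : ∀ i, IsClosed (Cs i))
    (C D : Set (Set X))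
    (hCalg : IsBoolSubalgOfSets C) (hCcl : ∀ A ∈ C, closure A ∈ C)
    (hCsIn : ∀ i, Cs i ∈ C)
    (hCgen : ∀ E : Set (Set X), IsBoolSubalgOfSets E → (∀ A ∈ E, closure A ∈ E) →
      (∀ i, Cs i ∈ E) → C ⊆ E)
    (hCfin : C.Finite)
    (hAtomIso : ∀ A : Set X, IsAtomOfSets C A →
      (A \ derivedSet A).Finite ∧ derivedSet (A \ derivedSet A) = ∅)
    (hDalg : IsBoolSubalgOfSets D) (hDder : ∀ A ∈ D, derivedSet A ∈ D)
    (hCsInD : ∀ i, Cs i ∈ D)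
    (hDgen : ∀ E : Set (Set X), IsBoolSubalgOfSets E → (∀ A ∈ E, derivedSet A ∈ E) →
      (∀ i, Cs i ∈ E) → D ⊆ E) :
    D.Finite ∧
    ∀ B : Set X, IsAtomOfSets D B →
      B ⊆ derivedSet B ∨ B ∩ derivedSet B = ∅ := by
  classical
  constructor
  · -- Finiteness of D
    -- the set of isolated points of atoms of C
    set I : Set X := ⋃₀ ((fun A => A \ derivedSet A) '' {A | IsAtomOfSets C A}) with hI
    have hatomsFin : {A : Set X | IsAtomOfSets C A}.Finite :=
      hCfin.subset fun A hA => hA.1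
    have hI' : derivedSet I = ∅ := by
      apply aux_derivedSet_sUnion (hatomsFin.image _)
      rintro s ⟨A, hA, rfl⟩
      exact (hAtomIso A hA).2
    -- isolated points of any member of C lie in I
    have hIsoI : ∀ S ∈ C, S \ derivedSet S ⊆ I := by
      intro S hS x hx
      obtain ⟨A, hA, hxA, hAS⟩ := aux_atom_through_point hCalg hCfin hS hx.1
      refine Set.mem_sUnion.mpr ⟨A \ derivedSet A, ⟨A, hA, rfl⟩, hxA, fun h => hx.2 ?_⟩
      exact derivedSet_mono _ _ hAS h
    -- the enveloping algebra E
    set E : Set (Set X) := {S | ∃ S₀ ∈ C, (S \ S₀) ∪ (S₀ \ S) ⊆ I} with hE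
    have hEalg : IsBoolSubalgOfSets E := by
      refine ⟨⟨Set.univ, hCalg.1, by simp⟩, ?_, ?_⟩
      · rintro S ⟨S₀, hS₀, hd⟩
        refine ⟨S₀ᶜ, hCalg.2.1 _ hS₀, ?_⟩
        intro x hx
        apply hd
        rcases hx with hx | hx
        · exact Or.inr ⟨by simpa using hx.2, hx.1⟩
        · exact Or.inl ⟨by simpa using hx.2, hx.1⟩
      · rintro S T ⟨S₀, hS₀, hdS⟩ ⟨T₀, hT₀, hdT⟩
        refine ⟨S₀ ∪ T₀, hCalg.2.2 _ _ hS₀ hT₀, ?_⟩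
        intro x hx
        rcases hx with ⟨hx1, hx2⟩ | ⟨hx1, hx2⟩
        · simp only [Set.mem_union, not_or] at hx1 hx2
          rcases hx1 with hx1 | hx1
          · exact hdS (Or.inl ⟨hx1, hx2.1⟩)
          · exact hdT (Or.inl ⟨hx1, hx2.2⟩)
        · simp only [Set.mem_union, not_or] at hx1 hx2
          rcases hx1 with hx1 | hx1
          · exact hdS (Or.inr ⟨hx1, hx2.1⟩)
          · exact hdT (Or.inr ⟨hx1, hx2.2⟩)
    have hEder : ∀ S ∈ E, derivedSet S ∈ E := by
      rintro S ⟨S₀, hS₀, hd⟩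
      -- S \ I = S₀ \ I
      have hdiff : S \ I = S₀ \ I := by
        ext x
        constructor
        · rintro ⟨hx, hxI⟩
          refine ⟨?_, hxI⟩
          by_contra hxS₀
          exact hxI (hd (Or.inl ⟨hx, hxS₀⟩))
        · rintro ⟨hx, hxI⟩
          refine ⟨?_, hxI⟩
          by_contra hxS
          exact hxI (hd (Or.inr ⟨hx, hxS⟩))
      have key : ∀ T : Set X, derivedSet T = derivedSet (T \ I) := by
        intro T
        have : T = (T \ I) ∪ (T ∩ I) := by
          ext x; by_cases hx : x ∈ I <;> simp [hx] <;> tauto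
        conv_lhs => rw [this]
        rw [derivedSet_union]
        have : derivedSet (T ∩ I) ⊆ derivedSet I :=
          derivedSet_mono _ _ Set.inter_subset_right
        rw [hI'] at this
        rw [Set.eq_empty_iff_forall_notMem.mpr fun x hx => this hx]
        simp
      have hSS₀ : derivedSet S = derivedSet S₀ := by
        rw [key S, key S₀, hdiff]
      refine ⟨closure S₀, hCcl _ hS₀, ?_⟩
      rw [hSS₀]
      intro x hx
      rcases hx with ⟨hx1, hx2⟩ | ⟨hx1, hx2⟩
      · exact absurd (derivedSet_subset_closure _ hx1) hx2
      · rw [aux_closure_eq_union_derivedSet] at hx1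
        rcases hx1 with hx1 | hx1
        · exact hIsoI S₀ hS₀ ⟨hx1, hx2⟩
        · exact absurd hx1 hx2
    have hCsInE : ∀ i, Cs i ∈ E := fun i => ⟨Cs i, hCsIn i, by simp⟩
    have hDE : D ⊆ E := hDgen E hEalg hEder hCsInE
    -- E is finite
    have hIfin : I.Finite := by
      apply Set.Finite.sUnion (hatomsFin.image _)
      rintro s ⟨A, hA, rfl⟩
      exact (hAtomIso A hA).1
    have hEfin : E.Finite := by
      have : E ⊆ Set.image2 (fun (S₀ : Set X) (J : Set X) => (S₀ \ I) ∪ J)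
          C {J | J ⊆ I} := by
        rintro S ⟨S₀, hS₀, hd⟩
        refine ⟨S₀, hS₀, S ∩ I, Set.inter_subset_right, ?_⟩
        have hdiff : S₀ \ I = S \ I := by
          ext x
          constructor
          · rintro ⟨hx, hxI⟩
            refine ⟨?_, hxI⟩
            by_contra hxS
            exact hxI (hd (Or.inr ⟨hx, hxS⟩))
          · rintro ⟨hx, hxI⟩
            refine ⟨?_, hxI⟩
            by_contra hxS₀
            exact hxI (hd (Or.inl ⟨hx, hxS₀⟩))
        show S₀ \ I ∪ S ∩ I = S
        rw [hdiff]
        ext x; by_cases hx : x ∈ I <;> simp [hx] <;> tauto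
      exact Set.Finite.subset (Set.Finite.image2 _ hCfin hIfin.finite_subsets) this
    exact hEfin.subset hDE
  · -- atom dichotomy
    intro B hB
    have hBd : derivedSet B ∈ D := hDder B hB.1
    have hint : B ∩ derivedSet B ∈ D := aux_inter_mem hDalg hB.1 hBd
    rcases hB.2.2 _ hint Set.inter_subset_left with h | h
    · exact Or.inr h
    · left
      intro x hx
      have : x ∈ B ∩ derivedSet B := by rw [h]; exact hx
      exact this.2
end

section
/- Vaught's criterion: Let R and S be countable Boolean algebras and ~ a relation between elements of R and S such that (i) 1_R ~ 1_S; (ii) A ~ 0_S implies A = 0_R and 0_R ~ B implies B = 0_S; (iii) whenever A ~ B and B = B₁ ⊔ B₂ is a disjoint decomposition in S, there is a disjoint decomposition A = A₁ ⊔ A₂ in R with A₁ ~ B₁ and A₂ ~ B₂, and symmetrically. Then R and S are isomorphic as Boolean algebras, via an isomorphism α such that every A ∈ R is a finite disjoint union A = A₁ ⊔ ... ⊔ A_n with A_i ~ A_i α for each i. -/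
set_option linter.unusedSectionVars false

namespace VaughtAux

open Classical

variable {γ δ π : Type*}

/-- supremum of a list -/
def lsup [SemilatticeSup γ] [OrderBot γ] (l : List γ) : γ := l.foldr (· ⊔ ·) ⊥

section lsup
variable [SemilatticeSup γ] [OrderBot γ]

@[simp] lemma lsup_nil : lsup ([] : List γ) = ⊥ := rfl
@[simp] lemma lsup_cons (a : γ) (l : List γ) : lsup (a :: l) = a ⊔ lsup l := rfl

lemma le_lsup {l : List γ} {a : γ} (h : a ∈ l) : a ≤ lsup l := by
  induction l with
  | nil => simp at h
  | cons b l ih =>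
    rcases List.mem_cons.1 h with rfl | h
    · exact le_sup_left
    · exact le_trans (ih h) le_sup_right

lemma lsup_le {l : List γ} {b : γ} (h : ∀ a ∈ l, a ≤ b) : lsup l ≤ b := by
  induction l with
  | nil => simp
  | cons c l ih => exact sup_le (h c (by simp)) (ih fun a ha => h a (by simp [ha]))

lemma lsup_map_le {l : List π} {f : π → γ} {b : γ} (h : ∀ a ∈ l, f a ≤ b) :
    lsup (l.map f) ≤ b := by
  refine lsup_le ?_
  intro x hx
  obtain ⟨a, ha, rfl⟩ := List.mem_map.1 hx
  exact h a ha

lemma le_lsup_map {l : List π} {f : π → γ} {a : π} (h : a ∈ l) : f a ≤ lsup (l.map f) :=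
  le_lsup (List.mem_map_of_mem (f := f) h)

lemma lsup_append (l m : List γ) : lsup (l ++ m) = lsup l ⊔ lsup m := by
  induction l with
  | nil => simp
  | cons a l ih => simp [ih, sup_assoc]

lemma lsup_flatMap (l : List π) (g : π → List γ) :
    lsup (l.flatMap g) = lsup (l.map fun a => lsup (g a)) := by
  induction l with
  | nil => rfl
  | cons a l ih => simp [List.flatMap_cons, lsup_append, ih]

lemma lsup_map_congr {l : List π} {f g : π → γ} (h : ∀ a ∈ l, f a = g a) :
    lsup (l.map f) = lsup (l.map g) := by
  rw [List.map_congr_left h]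

end lsup

section distrib
variable [DistribLattice γ] [OrderBot γ]

lemma disjoint_lsup {x : γ} {l : List γ} (h : ∀ a ∈ l, Disjoint x a) :
    Disjoint x (lsup l) := by
  induction l with
  | nil => simp
  | cons a l ih =>
    rw [lsup_cons]
    exact Disjoint.sup_right (h a (by simp)) (ih fun a ha => h a (by simp [ha]))

lemma inf_lsup_le {l : List π} {f : π → γ} {a : γ} :
    lsup (l.map f) ⊓ a ≤ lsup (l.map fun p => f p ⊓ a) := by
  induction l with
  | nil => simp
  | cons b l ih =>
    rw [List.map_cons, List.map_cons, lsup_cons, lsup_cons, inf_sup_right]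
    exact sup_le_sup le_rfl ih

/-- key disjointness lemma -/
lemma disjoint_lsup_map {g f : π → γ} {l : List π} {p : π}
    (hpw : l.Pairwise fun a b => Disjoint (g a) (g b))
    (hp : p ∈ l) (hf : ∀ q, f q ≤ g q) (hfp : f p = ⊥) :
    Disjoint (g p) (lsup (l.map f)) := by
  induction l with
  | nil => simp at hp
  | cons x l ih =>
    obtain ⟨hx, hl⟩ := List.pairwise_cons.1 hpw
    rcases List.mem_cons.1 hp with rfl | hp
    · rw [List.map_cons, lsup_cons, hfp]
      refine Disjoint.sup_right (by simp) (disjoint_lsup ?_)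
      intro b hb
      obtain ⟨q, hq, rfl⟩ := List.mem_map.1 hb
      exact (hx q hq).mono_right (hf q)
    · rw [List.map_cons, lsup_cons]
      exact Disjoint.sup_right (((hx p hp).symm).mono_right (hf x)) (ih hl hp)

end distrib

section pairs

variable {R S : Type*} [BooleanAlgebra R] [BooleanAlgebra S]

noncomputable def val (l : List (R × S)) (A : R) : S :=
  lsup (l.map fun p => if p.1 ≤ A then p.2 else ⊥)

noncomputable def valA (l : List (R × S)) (A : R) : R :=
  lsup (l.map fun p => if p.1 ≤ A then p.1 else ⊥)

def Exact (l : List (R × S)) (A : R) : Prop := A ≤ valA l A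

def swapL (l : List (R × S)) : List (S × R) := l.map Prod.swap

def Valid (r : R → S → Prop) (l : List (R × S)) : Prop :=
  l.Pairwise (fun p q => Disjoint p.1 q.1 ∧ Disjoint p.2 q.2) ∧
  (∀ p ∈ l, r p.1 p.2) ∧ lsup (l.map Prod.fst) = ⊤ ∧ lsup (l.map Prod.snd) = ⊤

def Refines (l l' : List (R × S)) : Prop :=
  ∃ h : R × S → List (R × S), l' = l.flatMap h ∧
    ∀ p ∈ l, lsup ((h p).map Prod.fst) = p.1 ∧ lsup ((h p).map Prod.snd) = p.2

lemma valA_le {l : List (R × S)} {A : R} : valA l A ≤ A := by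
  refine lsup_map_le fun p _ => ?_
  by_cases h : p.1 ≤ A <;> simp [h]

@[simp] lemma swapL_swapL (l : List (R × S)) : swapL (swapL l) = l := by
  simp [swapL, List.map_map, Function.comp_def]

lemma map_swapL (l : List (R × S)) (F : S × R → γ) :
    (swapL l).map F = l.map fun p => F p.swap := by
  rw [swapL, List.map_map]; rfl

lemma valid_swap {r : R → S → Prop} {l : List (R × S)} (hV : Valid r l) :
    Valid (fun b a => r a b) (swapL l) := by
  obtain ⟨hpw, hr, h1, h2⟩ := hV
  refine ⟨?_, ?_, ?_, ?_⟩
  · exact hpw.map Prod.swap (fun a b h => ⟨h.2, h.1⟩)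
  · intro q hq
    obtain ⟨p, hp, rfl⟩ := List.mem_map.1 hq
    exact hr p hp
  · rw [map_swapL]; exact h2
  · rw [map_swapL]; exact h1

lemma refines_refl (l : List (R × S)) : Refines l l := by
  refine ⟨fun p => [p], (List.flatMap_singleton' l).symm, ?_⟩
  intro p _; simp

lemma refines_trans {l m l' : List (R × S)} (h1 : Refines l m) (h2 : Refines m l') :
    Refines l l' := by
  obtain ⟨h, rfl, hsup⟩ := h1
  obtain ⟨h', rfl, hsup'⟩ := h2
  refine ⟨fun p => (h p).flatMap h', List.flatMap_assoc .., ?_⟩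
  intro p hp
  constructor
  · rw [List.map_flatMap, lsup_flatMap, ← (hsup p hp).1]
    exact lsup_map_congr fun q hq => (hsup' q (List.mem_flatMap.2 ⟨p, hp, hq⟩)).1
  · rw [List.map_flatMap, lsup_flatMap, ← (hsup p hp).2]
    exact lsup_map_congr fun q hq => (hsup' q (List.mem_flatMap.2 ⟨p, hp, hq⟩)).2

lemma refines_swap {l l' : List (R × S)} (h : Refines l l') :
    Refines (swapL l) (swapL l') := by
  obtain ⟨h, rfl, hsup⟩ := h
  refine ⟨fun q => swapL (h q.swap), ?_, ?_⟩
  · simp only [swapL, List.map_flatMap, List.flatMap_map, Function.comp_def, Prod.swap_swap]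
  · intro q hq
    obtain ⟨p, hp, rfl⟩ := List.mem_map.1 hq
    constructor
    · simp only [Prod.swap_swap, Prod.fst_swap, map_swapL]
      exact (hsup p hp).2
    · simp only [Prod.swap_swap, Prod.snd_swap, map_swapL]
      exact (hsup p hp).1

lemma exact_mono {l l' : List (R × S)} {A : R} (hR : Refines l l') (hA : Exact l A) :
    Exact l' A := by
  obtain ⟨h, rfl, hsup⟩ := hR
  refine le_trans hA (lsup_map_le fun p hp => ?_)
  by_cases hc : p.1 ≤ A
  · rw [if_pos hc, ← (hsup p hp).1]
    refine lsup_map_le fun q hq => ?_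
    have hq1 : q.1 ≤ p.1 := (hsup p hp).1 ▸ le_lsup_map hq
    have hqA : q.1 ≤ A := hq1.trans hc
    have hmem : q ∈ l.flatMap h := List.mem_flatMap.2 ⟨p, hp, hq⟩
    have := le_lsup_map (f := fun p => if p.1 ≤ A then p.1 else ⊥) hmem
    simp only [if_pos hqA] at this; exact this
  · simp [hc]

lemma val_mono {l : List (R × S)} {A A' : R} (h : A ≤ A') : val l A ≤ val l A' := by
  refine lsup_map_le fun p hp => ?_
  by_cases hc : p.1 ≤ A
  · rw [if_pos hc]
    have := le_lsup_map (f := fun p => if p.1 ≤ A' then p.2 else ⊥) hp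
    simp only [if_pos (hc.trans h)] at this; exact this
  · simp [hc]

lemma val_refines {r : R → S → Prop} {l l' : List (R × S)} {A : R}
    (hV : Valid r l) (hbots' : ∀ p ∈ l', p.1 = ⊥ → p.2 = ⊥)
    (hR : Refines l l') (hA : Exact l A) : val l' A = val l A := by
  obtain ⟨h, rfl, hsup⟩ := hR
  rw [val, val, List.map_flatMap, lsup_flatMap]
  refine lsup_map_congr fun p hp => ?_
  by_cases hc : p.1 ≤ A
  · rw [if_pos hc]
    apply le_antisymm
    · refine lsup_map_le fun q hq => ?_
      have hq1 : q.1 ≤ p.1 := (hsup p hp).1 ▸ le_lsup_map hq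
      rw [if_pos (hq1.trans hc)]
      exact (hsup p hp).2 ▸ le_lsup_map hq
    · conv_lhs => rw [← (hsup p hp).2]
      refine lsup_map_le fun q hq => ?_
      have hq1 : q.1 ≤ p.1 := (hsup p hp).1 ▸ le_lsup_map hq
      have := le_lsup_map (l := h p) (f := fun q => if q.1 ≤ A then q.2 else ⊥) hq
      simpa only [if_pos (hq1.trans hc)] using this
  · rw [if_neg hc]
    have hdis : Disjoint p.1 (valA l A) := by
      refine disjoint_lsup_map (g := Prod.fst) (hV.1.imp fun h => h.1) hp ?_ (if_neg hc)
      intro q; by_cases hq : q.1 ≤ A <;> simp [hq]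
    have hdisA : Disjoint p.1 A := hdis.mono_right hA
    refine le_bot_iff.1 (lsup_map_le fun q hq => ?_)
    by_cases hqc : q.1 ≤ A
    · rw [if_pos hqc]
      have hq1 : q.1 ≤ p.1 := (hsup p hp).1 ▸ le_lsup_map hq
      have hqbot : q.1 = ⊥ := (hdisA.mono_left hq1).eq_bot_of_le hqc
      exact (hbots' q (List.mem_flatMap.2 ⟨p, hp, hq⟩) hqbot).le
    · simp [hqc]

lemma exact_swap_val {l : List (R × S)} {A : R} (hA : Exact l A) :
    Exact (swapL l) (val l A) := by
  show val l A ≤ valA (swapL l) (val l A)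
  rw [valA, map_swapL]
  refine lsup_map_le fun p hp => ?_
  by_cases hc : p.1 ≤ A
  · rw [if_pos hc]
    have h2 : p.2 ≤ val l A := by
      have := le_lsup_map (f := fun p : R × S => if p.1 ≤ A then p.2 else ⊥) hp
      simp only [if_pos hc] at this; exact this
    have := le_lsup_map (l := l)
      (f := fun p : R × S => if (Prod.swap p).1 ≤ val l A then (Prod.swap p).1 else ⊥) hp
    simp only [Prod.fst_swap] at this
    simp only [if_pos h2] at this; exact this
  · simp [hc]

lemma val_swap_val {l : List (R × S)} {A : R}
    (hpw : l.Pairwise fun p q => Disjoint p.1 q.1 ∧ Disjoint p.2 q.2)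
    (hbots' : ∀ p ∈ l, p.2 = ⊥ → p.1 = ⊥)
    (hA : Exact l A) : val (swapL l) (val l A) = A := by
  rw [val, map_swapL]
  apply le_antisymm
  · refine lsup_map_le fun p hp => ?_
    simp only [Prod.fst_swap, Prod.snd_swap]
    by_cases hc : p.2 ≤ val l A
    · rw [if_pos hc]
      by_cases hc1 : p.1 ≤ A
      · exact hc1
      · have hdis : Disjoint p.2 (val l A) := by
          refine disjoint_lsup_map (g := Prod.snd) (hpw.imp fun h => h.2) hp ?_ (if_neg hc1)
          intro q; by_cases hq : q.1 ≤ A <;> simp [hq]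
        have : p.2 = ⊥ := hdis.eq_bot_of_le hc
        rw [hbots' p hp this]
        exact bot_le
    · simp [hc]
  · refine le_trans hA (lsup_map_le fun p hp => ?_)
    by_cases hc : p.1 ≤ A
    · rw [if_pos hc]
      have h2 : p.2 ≤ val l A := by
        have := le_lsup_map (f := fun p : R × S => if p.1 ≤ A then p.2 else ⊥) hp
        simp only [if_pos hc] at this; exact this
      have := le_lsup_map (l := l)
        (f := fun p : R × S => if (Prod.swap p).1 ≤ val l A then (Prod.swap p).2 else ⊥) hp
      simp only [Prod.fst_swap, Prod.snd_swap] at this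
      simp only [if_pos h2] at this; exact this
    · simp [hc]

lemma val_piece {l : List (R × S)} {p : R × S}
    (hpw : l.Pairwise fun p q => Disjoint p.1 q.1 ∧ Disjoint p.2 q.2)
    (hbots : ∀ q ∈ l, q.1 = ⊥ → q.2 = ⊥)
    (hp : p ∈ l) : val l p.1 = p.2 := by
  apply le_antisymm
  · refine lsup_map_le fun q hq => ?_
    by_cases hc : q.1 ≤ p.1
    · rw [if_pos hc]
      by_cases hqp : q = p
      · subst hqp; exact le_rfl
      · have hsym : Symmetric fun p q : R × S => Disjoint p.1 q.1 ∧ Disjoint p.2 q.2 :=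
          fun a b h => ⟨h.1.symm, h.2.symm⟩
        haveI : Std.Symm (fun p q : R × S => Disjoint p.1 q.1 ∧ Disjoint p.2 q.2) :=
          ⟨fun a b h => hsym h⟩
        have hd := (hpw.forall hq hp hqp).1
        have : q.1 = ⊥ := hd.eq_bot_of_le hc
        exact le_trans (hbots q hq this).le bot_le
    · simp [hc]
  · have := le_lsup_map (f := fun q : R × S => if q.1 ≤ p.1 then q.2 else ⊥) hp
    simp only [if_pos le_rfl] at this; exact this

lemma val_bot {l : List (R × S)} (hbots : ∀ q ∈ l, q.1 = ⊥ → q.2 = ⊥) :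
    val l (⊥ : R) = ⊥ := by
  refine le_bot_iff.1 (lsup_map_le fun q hq => ?_)
  by_cases hc : q.1 ≤ ⊥
  · rw [if_pos hc]
    exact (hbots q hq (le_bot_iff.1 hc)).le
  · simp [hc]

lemma exact_piece {l : List (R × S)} {p : R × S} (hp : p ∈ l) : Exact l p.1 := by
  have := le_lsup_map (f := fun q : R × S => if q.1 ≤ p.1 then q.1 else ⊥) hp
  simp only [if_pos le_rfl] at this; exact this

lemma pairwise_flatMap {D : π → π → Prop} {l : List π} {h : π → List π}
    (hpw : l.Pairwise D)
    (h1 : ∀ p ∈ l, (h p).Pairwise D)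
    (h2 : ∀ p ∈ l, ∀ q ∈ l, D p q → ∀ x ∈ h p, ∀ y ∈ h q, D x y) :
    (l.flatMap h).Pairwise D := by
  induction l with
  | nil => simp
  | cons a l ih =>
    rw [List.flatMap_cons, List.pairwise_append]
    obtain ⟨ha, hl⟩ := List.pairwise_cons.1 hpw
    refine ⟨h1 a (by simp), ih hl (fun p hp => h1 p (by simp [hp]))
      (fun p hp q hq => h2 p (by simp [hp]) q (by simp [hq])), ?_⟩
    intro x hx y hy
    obtain ⟨q, hq, hyq⟩ := List.mem_flatMap.1 hy
    exact h2 a (by simp) q (by simp [hq]) (ha q hq) x hx y hyq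

lemma step {r : R → S → Prop}
    (hsplitR : ∀ (B : S) (A₁ A₂ : R), Disjoint A₁ A₂ → r (A₁ ⊔ A₂) B →
      ∃ B₁ B₂ : S, Disjoint B₁ B₂ ∧ B = B₁ ⊔ B₂ ∧ r A₁ B₁ ∧ r A₂ B₂)
    {l : List (R × S)} (hV : Valid r l) (a : R) :
    ∃ l', Valid r l' ∧ Refines l l' ∧ Exact l' a := by
  classical
  have key : ∀ p : R × S, r p.1 p.2 → ∃ q : (R × S) × (R × S),
      q.1.1 = p.1 ⊓ a ∧ q.2.1 = p.1 \ a ∧ Disjoint q.1.2 q.2.2 ∧ p.2 = q.1.2 ⊔ q.2.2 ∧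
        r q.1.1 q.1.2 ∧ r q.2.1 q.2.2 := by
    intro p hp
    have hd : Disjoint (p.1 ⊓ a) (p.1 \ a) := disjoint_sdiff_self_right.mono_left inf_le_right
    have he : p.1 ⊓ a ⊔ p.1 \ a = p.1 := sup_inf_sdiff p.1 a
    obtain ⟨B₁, B₂, h1, h2, h3, h4⟩ := hsplitR p.2 _ _ hd (by rw [he]; exact hp)
    exact ⟨((p.1 ⊓ a, B₁), (p.1 \ a, B₂)), rfl, rfl, h1, h2, h3, h4⟩
  choose q hq using key
  set h : R × S → List (R × S) :=
    fun p => if hp : r p.1 p.2 then [(q p hp).1, (q p hp).2] else [p] with hh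
  have hmemle : ∀ p ∈ l, ∀ x ∈ h p, x.1 ≤ p.1 ∧ x.2 ≤ p.2 := by
    intro p hp x hx
    have hr := hV.2.1 p hp
    rw [hh] at hx
    simp only [dif_pos hr, List.mem_cons, List.not_mem_nil, or_false] at hx
    obtain ⟨e1, e2, _, e4, _, _⟩ := hq p hr
    rcases hx with rfl | rfl
    · exact ⟨e1.le.trans inf_le_left, e4 ▸ le_sup_left⟩
    · exact ⟨e2.le.trans sdiff_le, e4 ▸ le_sup_right⟩
  have hsup : ∀ p ∈ l, lsup ((h p).map Prod.fst) = p.1 ∧ lsup ((h p).map Prod.snd) = p.2 := by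
    intro p hp
    have hr := hV.2.1 p hp
    obtain ⟨e1, e2, _, e4, _, _⟩ := hq p hr
    rw [hh]
    simp only [dif_pos hr, List.map_cons, List.map_nil, lsup_cons, lsup_nil, sup_bot_eq]
    rw [e1, e2, ← e4, sup_inf_sdiff]
    exact ⟨rfl, rfl⟩
  refine ⟨l.flatMap h, ⟨?_, ?_, ?_, ?_⟩, ⟨h, rfl, hsup⟩, ?_⟩
  · refine pairwise_flatMap hV.1 ?_ ?_
    · intro p hp
      have hr := hV.2.1 p hp
      obtain ⟨e1, e2, e3, _, _, _⟩ := hq p hr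
      rw [hh]
      simp only [dif_pos hr]
      refine List.pairwise_cons.2 ⟨?_, by simp⟩
      intro y hy
      simp only [List.mem_cons, List.not_mem_nil, or_false] at hy
      subst hy
      refine ⟨?_, e3⟩
      rw [e1, e2]
      exact disjoint_sdiff_self_right.mono_left inf_le_right
    · intro p hp p' hp' hD x hx y hy
      obtain ⟨hx1, hx2⟩ := hmemle p hp x hx
      obtain ⟨hy1, hy2⟩ := hmemle p' hp' y hy
      exact ⟨(hD.1.mono hx1 hy1), (hD.2.mono hx2 hy2)⟩
  · intro z hz
    obtain ⟨p, hp, hzp⟩ := List.mem_flatMap.1 hz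
    have hr := hV.2.1 p hp
    rw [hh] at hzp
    simp only [dif_pos hr, List.mem_cons, List.not_mem_nil, or_false] at hzp
    obtain ⟨_, _, _, _, h5, h6⟩ := hq p hr
    rcases hzp with rfl | rfl
    · exact h5
    · exact h6
  · rw [List.map_flatMap, lsup_flatMap, lsup_map_congr fun p hp => (hsup p hp).1]
    exact hV.2.2.1
  · rw [List.map_flatMap, lsup_flatMap, lsup_map_congr fun p hp => (hsup p hp).2]
    exact hV.2.2.2
  · show a ≤ valA (l.flatMap h) a
    have h0 : a ≤ lsup (l.map fun p : R × S => p.1 ⊓ a) := by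
      have : lsup (l.map Prod.fst) ⊓ a ≤ lsup ((l.map Prod.fst).map (· ⊓ a)) := by
        rw [List.map_map]
        exact inf_lsup_le (f := Prod.fst)
      rw [hV.2.2.1, top_inf_eq, List.map_map] at this
      exact this
    refine h0.trans (lsup_map_le fun p hp => ?_)
    have hr := hV.2.1 p hp
    obtain ⟨e1, _, _, _, _, _⟩ := hq p hr
    have hmem : (q p hr).1 ∈ l.flatMap h := by
      refine List.mem_flatMap.2 ⟨p, hp, ?_⟩
      rw [hh]; simp [dif_pos hr]
    have h5 := le_lsup_map (f := fun x : R × S => if x.1 ≤ a then x.1 else ⊥) hmem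
    simp only [if_pos (e1.le.trans inf_le_right)] at h5
    rw [← e1]
    exact h5

lemma sup_univ_get [SemilatticeSup δ] [OrderBot δ] (l : List π) (F : π → δ) :
    (Finset.univ.sup fun i : Fin l.length => F (l.get i)) = lsup (l.map F) := by
  induction l with
  | nil => simp
  | cons a l ih =>
    rw [List.map_cons, lsup_cons, ← ih]
    show (Finset.univ.sup fun i : Fin (l.length + 1) => F ((a :: l).get i)) =
      F a ⊔ Finset.univ.sup fun i : Fin l.length => F (l.get i)
    apply le_antisymm
    · refine Finset.sup_le fun i _ => ?_
      refine Fin.cases ?_ ?_ i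
      · exact le_sup_left
      · intro j
        exact le_sup_of_le_right
          (Finset.le_sup (f := fun i : Fin l.length => F (l.get i)) (Finset.mem_univ j))
    · refine sup_le ?_ ?_
      · exact Finset.le_sup (f := fun i : Fin (l.length + 1) => F ((a :: l).get i))
          (Finset.mem_univ 0)
      · refine Finset.sup_le fun j _ => ?_
        exact Finset.le_sup (f := fun i : Fin (l.length + 1) => F ((a :: l).get i))
          (Finset.mem_univ j.succ)

end pairs

end VaughtAux

open VaughtAux

/-- Vaught's criterion: if `R`, `S` are countable Boolean algebras and `r` is a relation
between them with `⊤ r ⊤`, related-to-`⊥` elements are `⊥`, and disjoint decompositions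
can be matched back and forth, then `R ≅ S` via an isomorphism `α` such that every
`A ∈ R` is a finite disjoint union of elements `Aᵢ` with `Aᵢ r (α Aᵢ)`. -/
theorem vaught_criterion
    {R S : Type*} [BooleanAlgebra R] [BooleanAlgebra S] [Countable R] [Countable S]
    (r : R → S → Prop)
    (htop : r ⊤ ⊤)
    (hbotR : ∀ A : R, r A ⊥ → A = ⊥)
    (hbotS : ∀ B : S, r ⊥ B → B = ⊥)
    (hsplitS : ∀ (A : R) (B₁ B₂ : S), Disjoint B₁ B₂ → r A (B₁ ⊔ B₂) →
      ∃ A₁ A₂ : R, Disjoint A₁ A₂ ∧ A = A₁ ⊔ A₂ ∧ r A₁ B₁ ∧ r A₂ B₂)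
    (hsplitR : ∀ (B : S) (A₁ A₂ : R), Disjoint A₁ A₂ → r (A₁ ⊔ A₂) B →
      ∃ B₁ B₂ : S, Disjoint B₁ B₂ ∧ B = B₁ ⊔ B₂ ∧ r A₁ B₁ ∧ r A₂ B₂) :
    ∃ α : R ≃o S, ∀ A : R, ∃ (n : ℕ) (f : Fin n → R),
      (∀ i j, i ≠ j → Disjoint (f i) (f j)) ∧
      A = (Finset.univ : Finset (Fin n)).sup f ∧
      ∀ i, r (f i) (α (f i)) := by
  classical
  -- r ⊥ ⊥ holds
  have hrbot : r ⊥ ⊥ := by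
    obtain ⟨A₁, A₂, hd, he, h1, h2⟩ := hsplitS ⊤ ⊤ ⊥ disjoint_bot_right (by simpa using htop)
    exact (hbotR A₂ h2) ▸ h2
  -- split hypothesis for the flipped relation
  have hsplitS' : ∀ (B : R) (A₁ A₂ : S), Disjoint A₁ A₂ → (fun b a => r a b) (A₁ ⊔ A₂) B →
      ∃ B₁ B₂ : R, Disjoint B₁ B₂ ∧ B = B₁ ⊔ B₂ ∧ (fun b a => r a b) A₁ B₁ ∧
        (fun b a => r a b) A₂ B₂ := by
    intro B A₁ A₂ hd hr
    obtain ⟨B₁, B₂, h1, h2, h3, h4⟩ := hsplitS B A₁ A₂ hd hr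
    exact ⟨B₁, B₂, h1, h2, h3, h4⟩
  have stepRS : ∀ l : List (R × S), Valid r l → ∀ (a : R) (b : S),
      ∃ l', Valid r l' ∧ Refines l l' ∧ Exact l' a ∧ Exact (swapL l') b := by
    intro l hV a b
    obtain ⟨l₁, hV₁, hRef₁, hEx₁⟩ := step hsplitR hV a
    obtain ⟨m, hVm, hRm, hExm⟩ := step hsplitS' (valid_swap hV₁) b
    have hRef₂ : Refines l₁ (swapL m) := by
      have h2 := refines_swap hRm
      rwa [swapL_swapL] at h2
    refine ⟨swapL m, ?_, refines_trans hRef₁ hRef₂, exact_mono hRef₂ hEx₁, ?_⟩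
    · exact valid_swap hVm
    · rwa [swapL_swapL]
  obtain ⟨eR, heR⟩ := exists_surjective_nat R
  obtain ⟨eS, heS⟩ := exists_surjective_nat S
  have hV0 : Valid r [((⊤ : R), (⊤ : S))] := by
    refine ⟨by simp, ?_, by simp, by simp⟩
    intro p hp
    simp only [List.mem_singleton] at hp
    subst hp; exact htop
  have stepF : ∀ (k : ℕ) (l : {l : List (R × S) // Valid r l}),
      {l' : {l : List (R × S) // Valid r l} // Refines l.1 l'.1 ∧ Exact l'.1 (eR k) ∧
        Exact (swapL l'.1) (eS k)} := by
    intro k l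
    have h := stepRS l.1 l.2 (eR k) (eS k)
    exact ⟨⟨h.choose, h.choose_spec.1⟩, h.choose_spec.2.1, h.choose_spec.2.2.1,
      h.choose_spec.2.2.2⟩
  let chain : ℕ → {l : List (R × S) // Valid r l} :=
    fun n => Nat.rec ⟨[((⊤ : R), (⊤ : S))], hV0⟩ (fun k ih => (stepF k ih).1) n
  have hsucc : ∀ k, Refines (chain k).1 (chain (k + 1)).1 ∧ Exact (chain (k + 1)).1 (eR k) ∧
      Exact (swapL (chain (k + 1)).1) (eS k) := fun k => (stepF k (chain k)).2
  have hmono : ∀ k m, k ≤ m → Refines (chain k).1 (chain m).1 := by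
    intro k m hkm
    induction m, hkm using Nat.le_induction with
    | base => exact refines_refl _
    | succ m hkm ih => exact refines_trans ih (hsucc m).1
  have hbots : ∀ k, ∀ p ∈ (chain k).1, p.1 = ⊥ → p.2 = ⊥ := by
    intro k p hp h1
    exact hbotS p.2 (h1 ▸ (chain k).2.2.1 p hp)
  have hbots' : ∀ k, ∀ p ∈ (chain k).1, p.2 = ⊥ → p.1 = ⊥ := by
    intro k p hp h2
    exact hbotR p.1 (h2 ▸ (chain k).2.2.1 p hp)
  have hbotsw : ∀ k, ∀ p ∈ swapL (chain k).1, p.1 = ⊥ → p.2 = ⊥ := by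
    intro k p hp h1
    obtain ⟨q, hq, rfl⟩ := List.mem_map.1 hp
    exact hbots' k q hq h1
  have hbotsw' : ∀ k, ∀ p ∈ swapL (chain k).1, p.2 = ⊥ → p.1 = ⊥ := by
    intro k p hp h1
    obtain ⟨q, hq, rfl⟩ := List.mem_map.1 hp
    exact hbots k q hq h1
  have hExx : ∀ A : R, ∃ k, Exact (chain k).1 A := by
    intro A
    obtain ⟨k, rfl⟩ := heR A
    exact ⟨k + 1, (hsucc k).2.1⟩
  have hExx' : ∀ B : S, ∃ k, Exact (swapL (chain k).1) B := by
    intro B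
    obtain ⟨k, rfl⟩ := heS B
    exact ⟨k + 1, (hsucc k).2.2⟩
  set αf : R → S := fun A => val (chain (hExx A).choose).1 A with hαf
  set βf : S → R := fun B => val (swapL (chain (hExx' B).choose).1) B with hβf
  have hval : ∀ k (A : R), Exact (chain k).1 A → val (chain k).1 A = αf A := by
    intro k A hA
    have hk0 : Exact (chain (hExx A).choose).1 A := (hExx A).choose_spec
    set m := max k (hExx A).choose
    have h1 : val (chain m).1 A = val (chain k).1 A :=
      val_refines (chain k).2 (hbots m) (hmono k m (le_max_left ..)) hA
    have h2 : val (chain m).1 A = val (chain (hExx A).choose).1 A :=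
      val_refines (chain (hExx A).choose).2 (hbots m)
        (hmono (hExx A).choose m (le_max_right ..)) hk0
    rw [hαf]
    exact h1.symm.trans h2
  have hval' : ∀ k (B : S), Exact (swapL (chain k).1) B →
      val (swapL (chain k).1) B = βf B := by
    intro k B hB
    have hk0 : Exact (swapL (chain (hExx' B).choose).1) B := (hExx' B).choose_spec
    set m := max k (hExx' B).choose
    have h1 : val (swapL (chain m).1) B = val (swapL (chain k).1) B :=
      val_refines (valid_swap (chain k).2) (hbotsw m)
        (refines_swap (hmono k m (le_max_left ..))) hB
    have h2 : val (swapL (chain m).1) B = val (swapL (chain (hExx' B).choose).1) B :=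
      val_refines (valid_swap (chain (hExx' B).choose).2) (hbotsw m)
        (refines_swap (hmono (hExx' B).choose m (le_max_right ..))) hk0
    rw [hβf]
    exact h1.symm.trans h2
  have hβα : ∀ A : R, βf (αf A) = A := by
    intro A
    set k := (hExx A).choose
    have hk : Exact (chain k).1 A := (hExx A).choose_spec
    have hαA : αf A = val (chain k).1 A := rfl
    have hEx2 : Exact (swapL (chain k).1) (αf A) := by
      rw [hαA]; exact exact_swap_val hk
    rw [← hval' k (αf A) hEx2, hαA]
    exact val_swap_val (chain k).2.1 (hbots' k) hk
  have hαβ : ∀ B : S, αf (βf B) = B := by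
    intro B
    set k := (hExx' B).choose
    have hk : Exact (swapL (chain k).1) B := (hExx' B).choose_spec
    have hβB : βf B = val (swapL (chain k).1) B := rfl
    have hEx2 : Exact (chain k).1 (βf B) := by
      have := exact_swap_val hk
      rwa [swapL_swapL, ← hβB] at this
    rw [← hval k (βf B) hEx2, hβB]
    have := val_swap_val (valid_swap (chain k).2).1 (hbotsw' k) hk
    rwa [swapL_swapL] at this
  have hmonoα : Monotone αf := by
    intro A A' hAA'
    set k1 := (hExx A).choose
    set k2 := (hExx A').choose
    set m := max k1 k2
    have h1 : Exact (chain m).1 A :=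
      exact_mono (hmono k1 m (le_max_left ..)) (hExx A).choose_spec
    have h2 : Exact (chain m).1 A' :=
      exact_mono (hmono k2 m (le_max_right ..)) (hExx A').choose_spec
    rw [← hval m A h1, ← hval m A' h2]
    exact val_mono hAA'
  have hmonoβ : Monotone βf := by
    intro B B' hBB'
    set k1 := (hExx' B).choose
    set k2 := (hExx' B').choose
    set m := max k1 k2
    have h1 : Exact (swapL (chain m).1) B :=
      exact_mono (refines_swap (hmono k1 m (le_max_left ..))) (hExx' B).choose_spec
    have h2 : Exact (swapL (chain m).1) B' :=
      exact_mono (refines_swap (hmono k2 m (le_max_right ..))) (hExx' B').choose_spec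
    rw [← hval' m B h1, ← hval' m B' h2]
    exact val_mono hBB'
  refine ⟨Equiv.toOrderIso ⟨αf, βf, hβα, hαβ⟩ hmonoα hmonoβ, ?_⟩
  intro A
  set k := (hExx A).choose
  have hk : Exact (chain k).1 A := (hExx A).choose_spec
  set l := (chain k).1 with hl
  refine ⟨l.length, fun i => if (l.get i).1 ≤ A then (l.get i).1 else ⊥, ?_, ?_, ?_⟩
  · intro i j hij
    have hpw : ∀ (i j : Fin l.length), i < j → Disjoint (l.get i).1 (l.get j).1 := by
      intro i j h
      exact (List.pairwise_iff_get.1 (chain k).2.1 i j h).1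
    have hle : ∀ i : Fin l.length,
        (if (l.get i).1 ≤ A then (l.get i).1 else ⊥) ≤ (l.get i).1 := by
      intro i
      split <;> simp
    rcases hij.lt_or_gt with h | h
    · exact (hpw i j h).mono (hle i) (hle j)
    · exact ((hpw j i h).symm).mono (hle i) (hle j)
  · have hb : (Finset.univ.sup fun i : Fin l.length =>
        if (l.get i).1 ≤ A then (l.get i).1 else ⊥) = valA l A := by
      rw [valA, ← sup_univ_get l (fun p => if p.1 ≤ A then p.1 else ⊥)]
    rw [hb]
    exact le_antisymm hk valA_le
  · intro i
    set p := l.get i with hp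
    have hpmem : p ∈ l := l.get_mem i
    by_cases hc : p.1 ≤ A
    · have h1 : αf p.1 = p.2 := by
        rw [← hval k p.1 (exact_piece hpmem)]
        exact val_piece (chain k).2.1 (hbots k) hpmem
      have : r p.1 (αf p.1) := h1 ▸ (chain k).2.2.1 p hpmem
      show r (if p.1 ≤ A then p.1 else ⊥) (αf (if p.1 ≤ A then p.1 else ⊥))
      rw [if_pos hc]; exact this
    · have h1 : αf (⊥ : R) = ⊥ := by
        rw [← hval k ⊥ bot_le]
        exact val_bot (hbots k)
      have : r (⊥ : R) (αf ⊥) := h1 ▸ hrbot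
      show r (if p.1 ≤ A then p.1 else ⊥) (αf (if p.1 ≤ A then p.1 else ⊥))
      rw [if_neg hc]; exact this
end

section
/- For each finite extended PO system [P, L, f] there exists a second countable Stone space X admitting a complete [P,L,f]-partition, i.e. a complete P-partition {X_p} with closure of X_p compact iff p ∈ L, and |X_p| = f(p) for p ∈ L_min ∩ P^d. -/
set_option linter.unusedSectionVars false

/-- A bundled topological space. -/
structure TopPkg where
  carrier : Type
  [str : TopologicalSpace carrier]

attribute [instance] TopPkg.str

namespace EppAux

open Set Filter Topology List OnePoint TopologicalSpace

instance (P : Type) : TopologicalSpace (List (P × ℕ)) := ⊥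
instance (P : Type) : DiscreteTopology (List (P × ℕ)) := ⟨rfl⟩

instance secOnePoint (X : Type) [Countable X] [TopologicalSpace X] [DiscreteTopology X] :
    SecondCountableTopology (OnePoint X) := by
  refine (TopologicalSpace.IsTopologicalBasis.secondCountableTopology
    (b := (range fun x : X => ({OnePoint.some x} : Set (OnePoint X))) ∪
      (range fun F : Finset X => ({∞} ∪ OnePoint.some '' (↑F)ᶜ : Set (OnePoint X)))) ?_ ?_)
  · refine isTopologicalBasis_of_isOpen_of_nhds ?_ ?_
    · rintro s (⟨x, rfl⟩ | ⟨F, rfl⟩)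
      · rw [OnePoint.isOpen_iff_of_notMem (by simp [OnePoint.infty_ne_coe])]
        exact isOpen_discrete _
      · rw [OnePoint.isOpen_iff_of_mem (by simp)]
        constructor
        · exact (isClosed_discrete _)
        · refine (Set.Finite.isCompact ?_)
          refine Set.Finite.subset F.finite_toSet ?_
          intro x hx
          simp only [preimage_union, mem_compl_iff, mem_union, mem_preimage] at hx
          by_contra hxF
          exact hx (Or.inr ⟨x, by simpa using hxF, rfl⟩)
    · rintro (⟨⟩|x) u hu hou
      · have h1 : IsCompact ((OnePoint.some ⁻¹' u : Set X))ᶜ := by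
          rw [OnePoint.isOpen_iff_of_mem' hu] at hou; exact hou.1
        have hfin : ((OnePoint.some ⁻¹' u : Set X))ᶜ.Finite := by
          rwa [isCompact_iff_finite] at h1
        refine ⟨{∞} ∪ OnePoint.some '' (↑hfin.toFinset)ᶜ, Or.inr ⟨hfin.toFinset, rfl⟩,
          Or.inl rfl, ?_⟩
        rintro y (hy | ⟨x, hx, rfl⟩)
        · rw [mem_singleton_iff.1 hy]; exact hu
        · simp only [Finite.coe_toFinset, mem_compl_iff, not_not] at hx
          exact hx
      · exact ⟨{OnePoint.some x}, Or.inl ⟨x, rfl⟩, rfl,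
          by intro y hy; rw [mem_singleton_iff.1 hy]; exact hu⟩
  · exact Set.Countable.union (countable_range _) (countable_range _)

variable {P : Type} [Fintype P]

abbrev OA (P : Type) := OnePoint (List (P × ℕ))

/-- order relation on labelled pairs -/
def Rel (lt : P → P → Prop) (a b : P × ℕ) : Prop := lt a.1 b.1

/-- validity of a finite chain -/
def ValidL (lt : P → P → Prop) (L : Set P) (f : P → ℕ+) (l : List (P × ℕ)) : Prop :=
  l ≠ [] ∧ l.Pairwise (Rel lt) ∧ ∀ a ∈ l.head?, ((a : P × ℕ).2 < (f a.1 : ℕ) ∨ a.1 ∉ L)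

/-- the closed conditions on points of our space -/
def Cond (lt : P → P → Prop) (L : Set P) (f : P → ℕ+) (g : ℕ → OA P) : Prop :=
  (∀ i l, g i = OnePoint.some l → ValidL lt L f l ∧ l.length = i + 1) ∧
  (∀ i l, g (i + 1) = OnePoint.some l → g i = OnePoint.some l.dropLast)

/-- The carrier of the space. -/
abbrev Wt (lt : P → P → Prop) (L : Set P) (f : P → ℕ+) : Type :=
  {g : ℕ → OA P // Cond lt L f g ∧ g 0 ≠ ∞}

section Basic

variable {lt : P → P → Prop} {L : Set P} {f : P → ℕ+} {g : ℕ → OA P}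

lemma oa_cases (o : OA P) : o = ∞ ∨ ∃ l, o = OnePoint.some l :=
  Option.eq_none_or_eq_some o

lemma cond_anc (hg : Cond lt L f g) {j : ℕ} {l : List (P × ℕ)}
    (hj : g j = OnePoint.some l) : ∀ k, k ≤ j → g (j - k) = OnePoint.some (List.dropLast^[k] l) := by
  intro k
  induction k with
  | zero => simpa using hj
  | succ k ih =>
    intro hk
    have h1 : g (j - k) = OnePoint.some (List.dropLast^[k] l) := ih (Nat.le_of_succ_le hk)
    have h2 : j - (k + 1) + 1 = j - k := by omega
    have := hg.2 (j - (k+1)) (List.dropLast^[k] l) (by rw [h2]; exact h1)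
    rw [this, Function.iterate_succ_apply']

lemma cond_some_down (hg : Cond lt L f g) {j : ℕ} {l : List (P × ℕ)}
    (hj : g j = OnePoint.some l) {i : ℕ} (hij : i ≤ j) :
    g i = OnePoint.some (List.dropLast^[j - i] l) := by
  have := cond_anc hg hj (j - i) (Nat.sub_le _ _)
  rwa [Nat.sub_sub_self hij] at this

lemma cond_infty_up (hg : Cond lt L f g) {i j : ℕ} (h : g i = ∞) (hij : i ≤ j) : g j = ∞ := by
  rcases oa_cases (g j) with h' | ⟨l, h'⟩
  · exact h'
  · exact absurd (cond_some_down hg h' hij) (by rw [h]; exact fun hc => (by cases hc))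

lemma dropLast_iterate_eq_take (l : List (P × ℕ)) (k : ℕ) :
    List.dropLast^[k] l = l.take (l.length - k) := by
  induction k with
  | zero => simp
  | succ k ih =>
    rw [Function.iterate_succ_apply', ih, List.dropLast_eq_take, List.take_take,
      List.length_take]
    congr 1
    omega

lemma dropLast_iterate_prefix (l : List (P × ℕ)) (k : ℕ) : List.dropLast^[k] l <+: l := by
  rw [dropLast_iterate_eq_take]; exact List.take_prefix _ l

lemma dropLast_iterate_length (l : List (P × ℕ)) (k : ℕ) :
    (List.dropLast^[k] l).length = l.length - k := by
  rw [dropLast_iterate_eq_take, List.length_take]; omega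


lemma rel_last_of_prefix {l l' : List (P × ℕ)} {a b : P × ℕ}
    (hp : l.Pairwise (Rel lt)) (hpre : l' <+: l) (hlen : l'.length < l.length)
    (ha : l'.getLast? = Option.some a) (hb : l.getLast? = Option.some b) : Rel lt a b := by
  obtain ⟨ha', haeq⟩ := List.mem_getLast?_eq_getLast ha
  obtain ⟨hb', hbeq⟩ := List.mem_getLast?_eq_getLast hb
  have hl'pos : 0 < l'.length := List.length_pos_iff.2 ha'
  have hi : l'.length - 1 < l'.length := by omega
  have hj : l.length - 1 < l.length := by omega
  have hgetb : b = l[l.length - 1]'hj := by rw [hbeq]; exact List.getLast_eq_getElem hb'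
  have hgeta : a = l[l'.length - 1]'(by omega) := by
    rw [haeq, List.getLast_eq_getElem ha']
    exact (List.IsPrefix.getElem hpre hi)
  rw [hgeta, hgetb]
  exact List.pairwise_iff_getElem.1 hp _ _ _ _ (by omega)

lemma rel_mem_last {l : List (P × ℕ)} {a b : P × ℕ}
    (hp : l.Pairwise (Rel lt)) (ha : a ∈ l) (hb : l.getLast? = Option.some b) :
    a = b ∨ Rel lt a b := by
  obtain ⟨hb', hbeq⟩ := List.mem_getLast?_eq_getLast hb
  obtain ⟨i, hi, haeq⟩ := List.mem_iff_getElem.1 ha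
  have hj : l.length - 1 < l.length := by omega
  have hgetb : b = l[l.length - 1]'hj := by rw [hbeq]; exact List.getLast_eq_getElem hb'
  rcases Nat.lt_or_ge i (l.length - 1) with hlt | hge
  · right; rw [← haeq, hgetb]; exact List.pairwise_iff_getElem.1 hp _ _ _ _ hlt
  · left; rw [← haeq, hgetb]; congr 1; omega

/-- the label of a coordinate -/
def labO : OA P → Option P
  | Option.none => none
  | Option.some l => l.getLast?.map Prod.fst

@[simp] lemma labO_infty : labO (∞ : OA P) = none := rfl

@[simp] lemma labO_some (l : List (P × ℕ)) :
    labO (OnePoint.some l) = l.getLast?.map Prod.fst := rfl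

lemma labO_elim {o : OA P} {p : P} (h : labO o = Option.some p) :
    ∃ l a, o = OnePoint.some l ∧ l.getLast? = Option.some a ∧ a.1 = p := by
  rcases oa_cases o with rfl | ⟨l, rfl⟩
  · simp at h
  · simp only [labO_some, Option.map_eq_some_iff] at h
    obtain ⟨a, ha, hap⟩ := h
    exact ⟨l, a, rfl, ha, hap⟩

/-- membership in the piece of the partition labelled `p` -/
def MemX (g : ℕ → OA P) (p : P) : Prop :=
  (∃ k, g (k + 1) = ∞ ∧ labO (g k) = Option.some p) ∨
  ((∀ i, g i ≠ ∞) ∧ ∃ N, ∀ i, N ≤ i → labO (g i) = Option.some p)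

lemma lab_lt (hg : Cond lt L f g) {i j : ℕ} (hij : i < j) {p q : P}
    (hp : labO (g i) = Option.some p) (hq : labO (g j) = Option.some q) : lt p q := by
  obtain ⟨li, a, hgi, hlia, hap⟩ := labO_elim hp
  obtain ⟨lj, b, hgj, hljb, hbq⟩ := labO_elim hq
  have h1 : g i = OnePoint.some (List.dropLast^[j - i] lj) := cond_some_down hg hgj hij.le
  rw [hgi] at h1
  have h2 : li = List.dropLast^[j - i] lj := by
    have := (OnePoint.some_eq_iff _ _).1 h1; exact this
  have hpre : li <+: lj := h2 ▸ dropLast_iterate_prefix lj (j - i)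
  have hlen : li.length < lj.length := by
    have hli := (hg.1 i li hgi).2
    have hlj := (hg.1 j lj hgj).2
    omega
  have := rel_last_of_prefix (lt := lt) (hg.1 j lj hgj).1.2.1 hpre hlen hlia hljb
  rw [← hap, ← hbq]; exact this

lemma memx_unique (hg : Cond lt L f g) {p q : P} (hp : MemX g p) (hq : MemX g q) : p = q := by
  rcases hp with ⟨k, hk1, hk2⟩ | ⟨hfin, N, hN⟩
  · rcases hq with ⟨k', hk1', hk2'⟩ | ⟨hfin', _⟩
    · rcases Nat.lt_trichotomy k k' with h | h | h
      · exfalso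
        have : g k' = ∞ := cond_infty_up hg hk1 h
        rw [this] at hk2'; simp at hk2'
      · subst h; rw [hk2] at hk2'; exact Option.some_inj.1 hk2'
      · exfalso
        have : g k = ∞ := cond_infty_up hg hk1' h
        rw [this] at hk2; simp at hk2
    · exfalso
      obtain ⟨l, a, hl, _, _⟩ := labO_elim hk2
      exact hfin' (k+1) hk1
  · rcases hq with ⟨k', hk1', _⟩ | ⟨hfin', N', hN'⟩
    · exact absurd hk1' (hfin (k'+1))
    · have h1 := hN (max N N') (le_max_left _ _)
      have h2 := hN' (max N N') (le_max_right _ _)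
      rw [h1] at h2; exact Option.some_inj.1 h2

lemma memx_exists (htrans : ∀ a b c, lt a b → lt b c → lt a c)
    (hanti : ∀ a b, lt a b → lt b a → a = b)
    (hg : Cond lt L f g) (h0 : g 0 ≠ ∞) : ∃ p, MemX g p := by
  by_cases hfin : ∃ i, g i = ∞
  · -- finite case : take the least level equal to ∞
    classical
    have hk₀ : g (Nat.find hfin) = ∞ := Nat.find_spec hfin
    have hk₀pos : Nat.find hfin ≠ 0 := by intro h; exact h0 (h ▸ hk₀)
    obtain ⟨k, hkeq⟩ : ∃ k, Nat.find hfin = k + 1 := ⟨Nat.find hfin - 1, by omega⟩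
    rw [hkeq] at hk₀
    have hklt : g k ≠ ∞ := Nat.find_min hfin (by omega)
    rcases oa_cases (g k) with h | ⟨l, hl⟩
    · exact absurd h hklt
    · have hvl := (hg.1 k l hl).1
      have ha : l.getLast? = Option.some (l.getLast hvl.1) := List.getLast?_eq_getLast hvl.1
      exact ⟨(l.getLast hvl.1).1, Or.inl ⟨k, hk₀, by rw [hl]; simp [ha]⟩⟩
  · -- infinite case
    push_neg at hfin
    have hlab : ∀ i, ∃ p, labO (g i) = Option.some p := by
      intro i
      rcases oa_cases (g i) with h | ⟨l, hl⟩
      · exact absurd h (hfin i)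
      · have hvl := (hg.1 i l hl).1
        exact ⟨(l.getLast hvl.1).1, by rw [hl]; simp [List.getLast?_eq_getLast hvl.1]⟩
    choose pl hpl using hlab
    have : ∃ p : P, (pl ⁻¹' {p}).Infinite := by
      obtain ⟨p, hp⟩ := Finite.exists_infinite_fiber pl
      exact ⟨p, Set.infinite_coe_iff.1 hp⟩
    obtain ⟨p, hp⟩ := this
    obtain ⟨N, hN⟩ : ∃ N, pl N = p := by
      obtain ⟨N, hN⟩ := hp.nonempty; exact ⟨N, hN⟩
    refine ⟨p, Or.inr ⟨hfin, N, fun i hi => ?_⟩⟩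
    obtain ⟨j, hj, hij⟩ := hp.exists_gt i
    have h1 : pl i = p ∨ lt p (pl i) := by
      rcases Nat.eq_or_lt_of_le hi with h | h
      · exact Or.inl (h ▸ hN)
      · exact Or.inr (hN ▸ lab_lt hg h (hpl N) (hpl i))
    rcases h1 with h1 | h1
    · rw [← h1]; exact hpl i
    · have h2 : lt (pl i) p := hj ▸ lab_lt hg hij (hpl i) (hpl j)
      rw [hanti _ _ h1 h2]
      exact hpl i

lemma memx_infinite_lt_self (hg : Cond lt L f g) {p : P}
    (h : MemX g p) (hinf : ∀ i, g i ≠ ∞) : lt p p := by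
  rcases h with ⟨k, hk, _⟩ | ⟨_, N, hN⟩
  · exact absurd hk (hinf (k+1))
  · exact lab_lt hg (Nat.lt_succ_self N) (hN N le_rfl) (hN (N+1) (Nat.le_succ N))


/-- root points -/
def rootF (p : P) (n : ℕ) : ℕ → OA P := fun i => if i = 0 then OnePoint.some [(p, n)] else ∞

lemma rootF_cond {p : P} {n : ℕ} (h : n < (f p : ℕ) ∨ p ∉ L) :
    Cond lt L f (rootF p n) ∧ rootF p n 0 ≠ ∞ := by
  refine ⟨⟨?_, ?_⟩, ?_⟩
  · intro i l hl
    rcases eq_or_ne i 0 with rfl | hi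
    · simp only [rootF, if_pos rfl] at hl
      have : l = [(p, n)] := ((OnePoint.some_eq_iff _ _).1 hl.symm)
      subst this
      exact ⟨⟨by simp, by simp [Rel], by simpa using h⟩, by simp⟩
    · simp only [rootF, if_neg hi] at hl
      exact absurd hl (by exact fun hc => (by cases hc))
  · intro i l hl
    simp only [rootF, if_neg (Nat.succ_ne_zero i)] at hl
    exact absurd hl (by exact fun hc => (by cases hc))
  · simp only [rootF, if_pos rfl]
    exact fun hc => (by cases hc)

def rootW (p : P) (n : ℕ) (h : n < (f p : ℕ) ∨ p ∉ L) : Wt lt L f :=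
  ⟨rootF p n, rootF_cond h⟩

lemma rootF_memx (p : P) (n : ℕ) : MemX (rootF (P := P) p n) p := by
  refine Or.inl ⟨0, by simp [rootF], ?_⟩
  simp [rootF]

/-- the ambient set of conditions -/
def CondS (lt : P → P → Prop) (L : Set P) (f : P → ℕ+) : Set (ℕ → OA P) :=
  {g | Cond lt L f g}

lemma isClosed_condS : IsClosed (CondS lt L f) := by
  have heq : CondS lt L f =
      (⋂ i, (fun g : ℕ → OA P => g i) ⁻¹'
        {o : OA P | ∀ l, o = OnePoint.some l → ValidL lt L f l ∧ l.length = i + 1}) ∩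
      (⋂ i, ⋂ l : List (P × ℕ),
        ((fun g : ℕ → OA P => g (i+1)) ⁻¹' ({OnePoint.some l} : Set (OA P))ᶜ ∪
         (fun g : ℕ → OA P => g i) ⁻¹' {OnePoint.some l.dropLast})) := by
    ext g
    constructor
    · rintro ⟨h1, h2⟩
      refine ⟨mem_iInter.2 fun i l hl => h1 i l hl, ?_⟩
      refine mem_iInter.2 fun i => mem_iInter.2 fun l => ?_
      by_cases hc : g (i+1) = OnePoint.some l
      · exact Or.inr (h2 i l hc)
      · exact Or.inl hc
    · rintro ⟨h1, h2⟩
      refine ⟨fun i l hl => (mem_iInter.1 h1 i) l hl, fun i l hl => ?_⟩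
      rcases (mem_iInter.1 (mem_iInter.1 h2 i) l) with h | h
      · exact absurd hl h
      · exact h
  rw [heq]
  refine IsClosed.inter (isClosed_iInter fun i => ?_) (isClosed_iInter fun i =>
    isClosed_iInter fun l => ?_)
  · refine IsClosed.preimage (continuous_apply i) ?_
    refine (OnePoint.isClosed_iff_of_mem ?_).2 (isClosed_discrete _)
    intro l hl
    cases hl
  · refine IsClosed.union ?_ (IsClosed.preimage (continuous_apply i) isClosed_singleton)
    refine IsClosed.preimage (continuous_apply (i+1)) ?_
    rw [isClosed_compl_iff, OnePoint.isOpen_iff_of_notMem]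
    · exact isOpen_discrete _
    · simp only [mem_singleton_iff]
      exact fun hc => (by cases hc)

lemma isCompact_condS : IsCompact (CondS lt L f) :=
  (isClosed_condS).isCompact

lemma cond_zero_ne_infty {g : ℕ → OA P} (hg : Cond lt L f g) {k : ℕ} {r : List (P × ℕ)}
    (hk : g k = OnePoint.some r) : g 0 ≠ ∞ := by
  have := cond_some_down hg hk (Nat.zero_le k)
  rw [this]
  exact fun hc => (by cases hc)

lemma isCompact_pull {U : Set (ℕ → OA P)} (hU : IsClosed U)
    (hsub : ∀ g ∈ U, Cond lt L f g → g 0 ≠ ∞) :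
    IsCompact (Subtype.val ⁻¹' U : Set (Wt lt L f)) := by
  rw [Subtype.isCompact_iff]
  have himg : (Subtype.val '' (Subtype.val ⁻¹' U : Set (Wt lt L f))) = U ∩ CondS lt L f := by
    ext g
    constructor
    · rintro ⟨⟨g', hg'⟩, hgU, rfl⟩
      exact ⟨hgU, hg'.1⟩
    · rintro ⟨hgU, hgc⟩
      exact ⟨⟨g, hgc, hsub g hgU hgc⟩, hgU, rfl⟩
  rw [himg]
  exact (hU.inter isClosed_condS).isCompact

/-- last index of a list -/
def lidx (l : List (P × ℕ)) : ℕ := (l.getLast?.map Prod.snd).getD 0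

def EkS (k : ℕ) (r : List (P × ℕ)) : Set (ℕ → OA P) := {g | g k = OnePoint.some r}

def GoodV (r : List (P × ℕ)) (N : ℕ) : Set (OA P) :=
  {o | ∀ l, o = OnePoint.some l → ¬(l.dropLast = r ∧ lidx l < N)}

def BUS (k : ℕ) (r : List (P × ℕ)) (N : ℕ) : Set (ℕ → OA P) :=
  EkS k r ∩ (fun g => g (k+1)) ⁻¹' GoodV r N

lemma isClopen_some_singleton (r : List (P × ℕ)) :
    IsClosed ({OnePoint.some r} : Set (OA P)) ∧ IsOpen ({OnePoint.some r} : Set (OA P)) := by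
  constructor
  · exact isClosed_singleton
  · rw [OnePoint.isOpen_iff_of_notMem]
    · exact isOpen_discrete _
    · simp only [mem_singleton_iff]
      exact fun hc => (by cases hc)

lemma EkS_eq (k : ℕ) (r : List (P × ℕ)) :
    EkS (P := P) k r = (fun g : ℕ → OA P => g k) ⁻¹' {OnePoint.some r} := rfl

lemma isOpen_EkS (k : ℕ) (r : List (P × ℕ)) : IsOpen (EkS (P := P) k r) := by
  rw [EkS_eq]; exact (isClopen_some_singleton r).2.preimage (continuous_apply k)

lemma isClosed_EkS (k : ℕ) (r : List (P × ℕ)) : IsClosed (EkS (P := P) k r) := by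
  rw [EkS_eq]; exact (isClopen_some_singleton r).1.preimage (continuous_apply k)

lemma bad_finite (r : List (P × ℕ)) (hr : r ≠ []) (N : ℕ) :
    {l : List (P × ℕ) | l.dropLast = r ∧ lidx l < N}.Finite := by
  refine Set.Finite.subset (Set.Finite.image (fun a : P × ℕ => r ++ [a])
    ((Set.finite_univ (α := P)).prod (Set.finite_Iio N))) ?_
  rintro l ⟨hdl, hlidx⟩
  have hlne : l ≠ [] := by
    intro hc
    subst hc
    simp only [List.dropLast_nil] at hdl
    exact hr hdl.symm
  have hgl : l.getLast? = Option.some (l.getLast hlne) := List.getLast?_eq_getLast hlne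
  refine ⟨l.getLast hlne, ⟨trivial, ?_⟩, ?_⟩
  · simp only [mem_Iio]
    have : lidx l = (l.getLast hlne).2 := by simp [lidx, hgl]
    omega
  · rw [← hdl]
    exact List.dropLast_append_getLast hlne

lemma infty_mem_GoodV (r : List (P × ℕ)) (N : ℕ) : (∞ : OA P) ∈ GoodV r N :=
  fun l hl => absurd hl (by exact fun hc => (by cases hc))

lemma coe_preimage_GoodV (r : List (P × ℕ)) (N : ℕ) :
    (OnePoint.some ⁻¹' GoodV r N : Set (List (P × ℕ)))ᶜ = {l | l.dropLast = r ∧ lidx l < N} := by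
  ext l
  simp only [mem_compl_iff, mem_preimage, GoodV, mem_setOf_eq, not_forall]
  constructor
  · rintro ⟨l', hl', h⟩
    have : l = l' := (OnePoint.some_eq_iff _ _).1 hl'
    subst this
    simpa using h
  · intro h
    exact ⟨l, rfl, by simpa using h⟩

lemma isOpen_GoodV (r : List (P × ℕ)) (hr : r ≠ []) (N : ℕ) : IsOpen (GoodV (P := P) r N) := by
  rw [OnePoint.isOpen_iff_of_mem' (infty_mem_GoodV r N)]
  refine ⟨?_, isOpen_discrete _⟩
  rw [coe_preimage_GoodV]
  exact (bad_finite r hr N).isCompact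

lemma isClosed_GoodV (r : List (P × ℕ)) (N : ℕ) : IsClosed (GoodV (P := P) r N) := by
  rw [OnePoint.isClosed_iff_of_mem (infty_mem_GoodV r N)]
  exact isClosed_discrete _

lemma isOpen_BUS (k : ℕ) (r : List (P × ℕ)) (hr : r ≠ []) (N : ℕ) :
    IsOpen (BUS (P := P) k r N) :=
  (isOpen_EkS k r).inter ((isOpen_GoodV r hr N).preimage (continuous_apply (k+1)))

lemma isClosed_BUS (k : ℕ) (r : List (P × ℕ)) (N : ℕ) : IsClosed (BUS (P := P) k r N) :=
  (isClosed_EkS k r).inter ((isClosed_GoodV r N).preimage (continuous_apply (k+1)))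

/-- basic clopen compact sets in `Wt` -/
def EkW (lt : P → P → Prop) (L : Set P) (f : P → ℕ+) (k : ℕ) (r : List (P × ℕ)) :
    Set (Wt lt L f) := Subtype.val ⁻¹' EkS k r

def BW (lt : P → P → Prop) (L : Set P) (f : P → ℕ+) (k : ℕ) (r : List (P × ℕ)) (N : ℕ) :
    Set (Wt lt L f) := Subtype.val ⁻¹' BUS k r N

lemma isOpen_EkW (k : ℕ) (r : List (P × ℕ)) : IsOpen (EkW lt L f k r) :=
  (isOpen_EkS k r).preimage continuous_subtype_val

lemma isCompact_EkW (k : ℕ) (r : List (P × ℕ)) : IsCompact (EkW lt L f k r) :=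
  isCompact_pull (isClosed_EkS k r) (fun g hg hc => cond_zero_ne_infty hc hg)

lemma isOpen_BW (k : ℕ) (r : List (P × ℕ)) (hr : r ≠ []) (N : ℕ) :
    IsOpen (BW lt L f k r N) :=
  (isOpen_BUS k r hr N).preimage continuous_subtype_val

lemma isCompact_BW (k : ℕ) (r : List (P × ℕ)) (N : ℕ) : IsCompact (BW lt L f k r N) :=
  isCompact_pull (isClosed_BUS k r N) (fun g hg hc => cond_zero_ne_infty hc hg.1)

lemma mem_BW {x : Wt lt L f} {k : ℕ} {r : List (P × ℕ)} {N : ℕ}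
    (hk : x.1 k = OnePoint.some r) (hk1 : x.1 (k+1) = ∞) : x ∈ BW lt L f k r N := by
  refine ⟨hk, fun l hl => ?_⟩
  have hl' : x.1 (k+1) = OnePoint.some l := hl
  rw [hk1] at hl'
  cases hl'

lemma exists_last_some (x : Wt lt L f) (hfin : ∃ i, x.1 i = ∞) :
    ∃ k r, x.1 k = OnePoint.some r ∧ x.1 (k+1) = ∞ := by
  classical
  have hk₀ : x.1 (Nat.find hfin) = ∞ := Nat.find_spec hfin
  have hk₀pos : Nat.find hfin ≠ 0 := by intro h; rw [h] at hk₀; exact x.2.2 hk₀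
  obtain ⟨k, hkeq⟩ : ∃ k, Nat.find hfin = k + 1 := ⟨Nat.find hfin - 1, by omega⟩
  rw [hkeq] at hk₀
  have hklt : x.1 k ≠ ∞ := Nat.find_min hfin (by omega)
  rcases oa_cases (x.1 k) with h | ⟨l, hl⟩
  · exact absurd h hklt
  · exact ⟨k, l, hl, hk₀⟩

lemma nhds_fin {x : Wt lt L f} {k : ℕ} {r : List (P × ℕ)}
    (hk : x.1 k = OnePoint.some r) (hk1 : x.1 (k+1) = ∞)
    {t : Set (Wt lt L f)} (ht : t ∈ 𝓝 x) : ∃ N, BW lt L f k r N ⊆ t := by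
  classical
  rw [show 𝓝 x = comap Subtype.val (𝓝 x.1) from nhds_induced _ _] at ht
  obtain ⟨u, hu, hsub⟩ := Filter.mem_comap.1 ht
  obtain ⟨U, hUu, hUopen, hxU⟩ := mem_nhds_iff.1 hu
  obtain ⟨I, u', hIu', hpi⟩ := (isOpen_pi_iff.1 hUopen) x.1 hxU
  have hinfty_mem : ∀ i ∈ I, k < i → (∞ : OA P) ∈ u' i := by
    intro i hi hki
    have h2 := (hIu' i hi).2
    rwa [cond_infty_up x.2.1 hk1 (by omega)] at h2
  have hbadfin : ∀ i ∈ I, k < i → ((OnePoint.some ⁻¹' (u' i))ᶜ : Set (List (P × ℕ))).Finite := by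
    intro i hi hki
    have := ((OnePoint.isOpen_iff_of_mem' (hinfty_mem i hi hki)).1 (hIu' i hi).1).1
    rwa [isCompact_iff_finite] at this
  have hNi : ∀ i, ∃ Ni, i ∈ I → k < i → ∀ l ∈ ((OnePoint.some ⁻¹' (u' i))ᶜ : Set (List (P × ℕ))),
      lidx (List.dropLast^[i - (k+1)] l) < Ni := by
    intro i
    by_cases hi : i ∈ I ∧ k < i
    · obtain ⟨ub, hub⟩ := ((hbadfin i hi.1 hi.2).image
        (fun l => lidx (List.dropLast^[i - (k+1)] l))).bddAbove
      exact ⟨ub + 1, fun _ _ l hl => by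
        have := hub (Set.mem_image_of_mem _ hl)
        omega⟩
    · exact ⟨0, fun h1 h2 => absurd ⟨h1, h2⟩ hi⟩
  choose NΦ hNΦ using hNi
  refine ⟨I.sup NΦ, fun h hh => ?_⟩
  refine hsub (mem_preimage.2 (hUu (hpi ?_)))
  intro i hi
  rcases le_or_gt i k with hik | hik
  · have h1 : h.1 i = OnePoint.some (List.dropLast^[k - i] r) :=
      cond_some_down h.2.1 hh.1 hik
    have h2 : x.1 i = OnePoint.some (List.dropLast^[k - i] r) :=
      cond_some_down x.2.1 hk hik
    rw [h1, ← h2]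
    exact (hIu' i hi).2
  · rcases oa_cases (h.1 i) with he | ⟨l, hl⟩
    · rw [he]; exact hinfty_mem i hi hik
    · rw [hl]
      by_contra hni
      have hlbad : l ∈ ((OnePoint.some ⁻¹' (u' i))ᶜ : Set (List (P × ℕ))) := hni
      have hanc : h.1 (k+1) = OnePoint.some (List.dropLast^[i - (k+1)] l) :=
        cond_some_down h.2.1 hl (by omega)
      have hgood := hh.2 _ hanc
      refine hgood ⟨?_, ?_⟩
      · -- dropLast of the ancestor is r
        have h1 : h.1 k = OnePoint.some ((List.dropLast^[i - (k+1)] l).dropLast) :=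
          h.2.1.2 k _ hanc
        have h2 : h.1 k = OnePoint.some r := hh.1
        rw [h1] at h2
        exact (OnePoint.some_eq_iff _ _).1 h2
      · exact lt_of_lt_of_le (hNΦ i hi hik l hlbad) (Finset.le_sup hi)

lemma nhds_inf {x : Wt lt L f} (hinf : ∀ i, x.1 i ≠ ∞)
    {t : Set (Wt lt L f)} (ht : t ∈ 𝓝 x) :
    ∃ j r, x.1 j = OnePoint.some r ∧ EkW lt L f j r ⊆ t := by
  classical
  rw [show 𝓝 x = comap Subtype.val (𝓝 x.1) from nhds_induced _ _] at ht
  obtain ⟨u, hu, hsub⟩ := Filter.mem_comap.1 ht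
  obtain ⟨U, hUu, hUopen, hxU⟩ := mem_nhds_iff.1 hu
  obtain ⟨I, u', hIu', hpi⟩ := (isOpen_pi_iff.1 hUopen) x.1 hxU
  set j := I.sup id with hj
  rcases oa_cases (x.1 j) with he | ⟨r, hr⟩
  · exact absurd he (hinf j)
  refine ⟨j, r, hr, fun h hh => ?_⟩
  refine hsub (mem_preimage.2 (hUu (hpi ?_)))
  intro i hi
  have hij : i ≤ j := Finset.le_sup (f := id) hi
  have h1 : h.1 i = OnePoint.some (List.dropLast^[j - i] r) :=
    cond_some_down h.2.1 hh hij
  have h2 : x.1 i = OnePoint.some (List.dropLast^[j - i] r) :=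
    cond_some_down x.2.1 hr hij
  rw [h1, ← h2]
  exact (hIu' i hi).2

lemma valid_of_some {x : Wt lt L f} {k : ℕ} {r : List (P × ℕ)}
    (hk : x.1 k = OnePoint.some r) : ValidL lt L f r ∧ r.length = k + 1 :=
  x.2.1.1 k r hk

lemma locallyCompactW : LocallyCompactSpace (Wt lt L f) := by
  constructor
  intro x n hn
  by_cases hfin : ∃ i, x.1 i = ∞
  · obtain ⟨k, r, hk, hk1⟩ := exists_last_some x hfin
    obtain ⟨N, hN⟩ := nhds_fin hk hk1 hn
    refine ⟨BW lt L f k r N, ?_, hN, isCompact_BW k r N⟩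
    exact (isOpen_BW k r (valid_of_some hk).1.1 N).mem_nhds (mem_BW hk hk1)
  · push_neg at hfin
    obtain ⟨j, r, hj, hsub⟩ := nhds_inf hfin hn
    exact ⟨EkW lt L f j r, (isOpen_EkW j r).mem_nhds hj, hsub, isCompact_EkW j r⟩

lemma mem_closure_fin {x : Wt lt L f} {k : ℕ} {r : List (P × ℕ)}
    (hk : x.1 k = OnePoint.some r) (hk1 : x.1 (k+1) = ∞) {S : Set (Wt lt L f)} :
    x ∈ closure S ↔ ∀ N, (BW lt L f k r N ∩ S).Nonempty := by
  constructor
  · intro hx N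
    have := mem_closure_iff.1 hx (BW lt L f k r N)
      (isOpen_BW k r (valid_of_some hk).1.1 N) (mem_BW hk hk1)
    exact this
  · intro hN
    rw [mem_closure_iff]
    intro o ho hxo
    obtain ⟨N, hsub⟩ := nhds_fin hk hk1 (ho.mem_nhds hxo)
    obtain ⟨y, hy1, hy2⟩ := hN N
    exact ⟨y, hsub hy1, hy2⟩

lemma mem_closure_inf {x : Wt lt L f} (hinf : ∀ i, x.1 i ≠ ∞) {S : Set (Wt lt L f)} :
    x ∈ closure S ↔ ∀ j r, x.1 j = OnePoint.some r → (EkW lt L f j r ∩ S).Nonempty := by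
  constructor
  · intro hx j r hr
    exact mem_closure_iff.1 hx (EkW lt L f j r) (isOpen_EkW j r) hr
  · intro hN
    rw [mem_closure_iff]
    intro o ho hxo
    obtain ⟨j, r, hr, hsub⟩ := nhds_inf hinf (ho.mem_nhds hxo)
    obtain ⟨y, hy1, hy2⟩ := hN j r hr
    exact ⟨y, hsub hy1, hy2⟩

/-- the pieces of the partition -/
def XP (lt : P → P → Prop) (L : Set P) (f : P → ℕ+) (p : P) : Set (Wt lt L f) :=
  {x | MemX x.1 p}

lemma XP_nonempty (p : P) : (XP lt L f p).Nonempty :=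
  ⟨rootW p 0 (Or.inl (f p).2), rootF_memx p 0⟩

lemma XP_disjoint {p q : P} (hpq : p ≠ q) :
    Disjoint (XP lt L f p) (XP lt L f q) := by
  rw [Set.disjoint_left]
  intro x hxp hxq
  exact hpq (memx_unique x.2.1 hxp hxq)

lemma XP_union (htrans : ∀ a b c, lt a b → lt b c → lt a c)
    (hanti : ∀ a b, lt a b → lt b a → a = b) :
    (⋃ p, XP lt L f p) = Set.univ := by
  refine Set.eq_univ_of_forall fun x => ?_
  obtain ⟨p, hp⟩ := memx_exists htrans hanti x.2.1 x.2.2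
  exact Set.mem_iUnion.2 ⟨p, hp⟩

/-- child construction -/
def childF (g : ℕ → OA P) (k : ℕ) (r : List (P × ℕ)) (a : P × ℕ) : ℕ → OA P :=
  fun i => if i ≤ k then g i else if i = k + 1 then OnePoint.some (r ++ [a]) else ∞

lemma exists_child (htrans : ∀ a b c, lt a b → lt b c → lt a c)
    {x : Wt lt L f} {k : ℕ} {r : List (P × ℕ)}
    (hk : x.1 k = OnePoint.some r) {q : P}
    (hlab : labO (OnePoint.some r) = Option.some q) {p : P} (hqp : lt q p) (n : ℕ) :
    ∃ y : Wt lt L f, y ∈ XP lt L f p ∧ (∀ i ≤ k, y.1 i = x.1 i) ∧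
      y.1 (k+1) = OnePoint.some (r ++ [(p, n)]) ∧ y.1 (k+2) = ∞ := by
  obtain ⟨hval, hlen⟩ := valid_of_some hk
  obtain ⟨l', b, hl', hb, hbq⟩ := labO_elim hlab
  have hrl' : r = l' := (OnePoint.some_eq_iff _ _).1 hl'
  subst hrl'
  have hrel : ∀ c ∈ r, Rel lt c (p, n) := by
    intro c hc
    rcases rel_mem_last hval.2.1 hc hb with rfl | hcb
    · show lt c.1 p
      rw [hbq]; exact hqp
    · exact htrans _ _ _ hcb (show lt b.1 p by rw [hbq]; exact hqp)
  have hcond : Cond lt L f (childF x.1 k r (p, n)) := by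
    constructor
    · intro i l hl
      rcases le_or_gt i k with hik | hik
      · rw [childF, if_pos hik] at hl
        exact x.2.1.1 i l hl
      · rcases eq_or_ne i (k+1) with rfl | hik'
        · rw [childF, if_neg (by omega), if_pos rfl] at hl
          have : l = r ++ [(p, n)] := (OnePoint.some_eq_iff _ _).1 hl.symm
          subst this
          refine ⟨⟨by simp, ?_, ?_⟩, by simp [hlen]⟩
          · rw [List.pairwise_append]
            exact ⟨hval.2.1, List.pairwise_singleton _ _, by
              intro c hc d hd
              simp only [List.mem_singleton] at hd
              subst hd
              exact hrel c hc⟩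
          · rw [List.head?_append_of_ne_nil _ hval.1]
            exact hval.2.2
        · rw [childF, if_neg (by omega), if_neg hik'] at hl
          exact absurd hl (by exact fun hc => (by cases hc))
    · intro i l hl
      rcases le_or_gt (i+1) k with hik | hik
      · rw [childF, if_pos hik] at hl
        rw [childF, if_pos (by omega)]
        exact x.2.1.2 i l hl
      · rcases eq_or_ne (i+1) (k+1) with heq | hik'
        · have hik0 : i = k := by omega
          subst hik0
          rw [childF, if_neg (by omega), if_pos rfl] at hl
          have : l = r ++ [(p, n)] := (OnePoint.some_eq_iff _ _).1 hl.symm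
          subst this
          rw [childF, if_pos le_rfl, List.dropLast_concat]
          exact hk
        · rw [childF, if_neg (by omega), if_neg hik'] at hl
          exact absurd hl (by exact fun hc => (by cases hc))
  have h0 : childF x.1 k r (p, n) 0 ≠ ∞ := by
    rw [childF, if_pos (Nat.zero_le k)]
    exact cond_zero_ne_infty x.2.1 hk
  refine ⟨⟨childF x.1 k r (p, n), hcond, h0⟩, ?_, ?_, ?_, ?_⟩
  · refine Or.inl ⟨k+1, ?_, ?_⟩
    · show childF x.1 k r (p, n) (k+2) = ∞
      rw [childF, if_neg (by omega), if_neg (by omega)]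
    · show labO (childF x.1 k r (p, n) (k+1)) = Option.some p
      rw [childF, if_neg (by omega), if_pos rfl]
      simp [List.getLast?_concat]
  · intro i hik
    show childF x.1 k r (p, n) i = x.1 i
    rw [childF, if_pos hik]
  · show childF x.1 k r (p, n) (k+1) = _
    rw [childF, if_neg (by omega), if_pos rfl]
  · show childF x.1 k r (p, n) (k+2) = ∞
    rw [childF, if_neg (by omega), if_neg (by omega)]

lemma memx_above {h : Wt lt L f} {k : ℕ} {r : List (P × ℕ)} {q : P}
    (hk : h.1 k = OnePoint.some r) (hq : labO (OnePoint.some r) = Option.some q)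
    {p : P} (hp : MemX h.1 p) :
    (h.1 (k+1) = ∞ ∧ p = q) ∨ lt q p := by
  have hlabk : labO (h.1 k) = Option.some q := by rw [hk]; exact hq
  rcases hp with ⟨k', h1, h2⟩ | ⟨hinf, N, hN⟩
  · rcases Nat.lt_trichotomy k k' with hlt | heq | hgt
    · exact Or.inr (lab_lt h.2.1 hlt hlabk h2)
    · subst heq
      rw [hlabk] at h2
      exact Or.inl ⟨h1, (Option.some_inj.1 h2).symm⟩
    · exfalso
      have : h.1 k = ∞ := cond_infty_up h.2.1 h1 hgt
      rw [this] at hlabk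
      simp at hlabk
  · refine Or.inr (lab_lt h.2.1 (i := k) (j := max (k+1) N) (by omega) hlabk ?_)
    exact hN _ (le_max_right _ _)

lemma eq_of_fin {x y : Wt lt L f} {k : ℕ} {r : List (P × ℕ)}
    (hxk : x.1 k = OnePoint.some r) (hyk : y.1 k = OnePoint.some r)
    (hx1 : x.1 (k+1) = ∞) (hy1 : y.1 (k+1) = ∞) : x = y := by
  refine Subtype.ext (funext fun i => ?_)
  rcases le_or_gt i k with hik | hik
  · rw [cond_some_down x.2.1 hxk hik, cond_some_down y.2.1 hyk hik]
  · rw [cond_infty_up x.2.1 hx1 (by omega), cond_infty_up y.2.1 hy1 (by omega)]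

lemma lab_at_last {x : Wt lt L f} {q : P} (hxq : x ∈ XP lt L f q) {k : ℕ}
    {r : List (P × ℕ)} (hk : x.1 k = OnePoint.some r) (hk1 : x.1 (k+1) = ∞) :
    labO (OnePoint.some r) = Option.some q := by
  rcases hxq with ⟨k', h1, h2⟩ | ⟨hinf, _⟩
  · rcases Nat.lt_trichotomy k k' with hlt | heq | hgt
    · exfalso
      have : x.1 k' = ∞ := cond_infty_up x.2.1 hk1 (by omega)
      rw [this] at h2; simp at h2
    · subst heq; rw [hk] at h2; exact h2
    · exfalso
      have : x.1 k = ∞ := cond_infty_up x.2.1 h1 hgt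
      rw [this] at hk; cases hk
  · exact absurd hk1 (hinf (k+1))

lemma stab_of_inf {x : Wt lt L f} {q : P} (hxq : x ∈ XP lt L f q)
    (hinf : ∀ i, x.1 i ≠ ∞) : ∃ N, ∀ i, N ≤ i → labO (x.1 i) = Option.some q := by
  rcases hxq with ⟨k, h1, _⟩ | ⟨_, N, hN⟩
  · exact absurd h1 (hinf (k+1))
  · exact ⟨N, hN⟩

lemma derived_master (htrans : ∀ a b c, lt a b → lt b c → lt a c)
    {x : Wt lt L f} {q : P} (hxq : x ∈ XP lt L f q) (p : P) :
    x ∈ derivedSet (XP lt L f p) ↔ lt q p := by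
  rw [mem_derivedSet, accPt_iff_nhds]
  constructor
  · -- if x is an accumulation point then lt q p
    intro hacc
    by_cases hfin : ∃ i, x.1 i = ∞
    · obtain ⟨k, r, hk, hk1⟩ := exists_last_some x hfin
      have hlab := lab_at_last hxq hk hk1
      obtain ⟨y, ⟨hy1, hy2⟩, hyx⟩ := hacc (BW lt L f k r 0)
        ((isOpen_BW k r (valid_of_some hk).1.1 0).mem_nhds (mem_BW hk hk1))
      rcases memx_above hy1.1 hlab hy2 with ⟨hyinf, rfl⟩ | hlt
      · exact absurd (eq_of_fin hy1.1 hk hyinf hk1) (by exact fun h => hyx (h ▸ rfl))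
      · exact hlt
    · push_neg at hfin
      obtain ⟨N, hN⟩ := stab_of_inf hxq hfin
      rcases oa_cases (x.1 N) with he | ⟨r, hr⟩
      · exact absurd he (hfin N)
      have hlab : labO (OnePoint.some r) = Option.some q := by
        rw [← hr]; exact hN N le_rfl
      obtain ⟨y, ⟨hy1, hy2⟩, hyx⟩ := hacc (EkW lt L f N r)
        ((isOpen_EkW N r).mem_nhds hr)
      rcases memx_above hy1 hlab hy2 with ⟨_, rfl⟩ | hlt
      · exact memx_infinite_lt_self x.2.1 hxq hfin
      · exact hlt
  · -- conversely
    intro hqp U hU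
    by_cases hfin : ∃ i, x.1 i = ∞
    · obtain ⟨k, r, hk, hk1⟩ := exists_last_some x hfin
      have hlab := lab_at_last hxq hk hk1
      obtain ⟨N, hNsub⟩ := nhds_fin hk hk1 hU
      obtain ⟨y, hyX, hyag, hyk1, hyk2⟩ := exists_child htrans hk hlab hqp N
      refine ⟨y, ⟨hNsub ⟨?_, ?_⟩, hyX⟩, ?_⟩
      · show y.1 k = OnePoint.some r
        rw [hyag k le_rfl]; exact hk
      · intro l hl
        have hl' : y.1 (k+1) = OnePoint.some l := hl
        rw [hyk1] at hl'
        have : l = r ++ [(p, N)] := ((OnePoint.some_eq_iff _ _).1 hl').symm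
        subst this
        rintro ⟨-, hlidx⟩
        rw [lidx, List.getLast?_concat] at hlidx
        simp at hlidx
      · intro he
        have := congrArg (fun z : Wt lt L f => z.1 (k+1)) he
        rw [hyk1, hk1] at this
        cases this
    · push_neg at hfin
      obtain ⟨N₀, hN₀⟩ := stab_of_inf hxq hfin
      obtain ⟨j, r, hj, hsub⟩ := nhds_inf hfin hU
      set j' := max j N₀ with hj'def
      rcases oa_cases (x.1 j') with he | ⟨r', hr'⟩
      · exact absurd he (hfin j')
      have hlab : labO (OnePoint.some r') = Option.some q := by
        rw [← hr']; exact hN₀ j' (le_max_right _ _)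
      obtain ⟨y, hyX, hyag, hyk1, hyk2⟩ := exists_child htrans hr' hlab hqp 0
      refine ⟨y, ⟨hsub ?_, hyX⟩, ?_⟩
      · show y.1 j = OnePoint.some r
        rw [hyag j (le_max_left _ _)]; exact hj
      · intro he
        have := congrArg (fun z : Wt lt L f => z.1 (j'+2)) he
        rw [hyk2] at this
        exact absurd this.symm (hfin (j'+2))

lemma derivedSet_XP (htrans : ∀ a b c, lt a b → lt b c → lt a c)
    (hanti : ∀ a b, lt a b → lt b a → a = b) (p : P) :
    derivedSet (XP lt L f p) = ⋃ q ∈ {q | lt q p}, XP lt L f q := by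
  ext x
  obtain ⟨q0, hq0⟩ := memx_exists htrans hanti x.2.1 x.2.2
  have hx0 : x ∈ XP lt L f q0 := hq0
  rw [Set.mem_iUnion₂]
  constructor
  · intro h
    exact ⟨q0, (derived_master htrans hx0 p).1 h, hx0⟩
  · rintro ⟨q, hq, hxq⟩
    have : q = q0 := memx_unique x.2.1 hxq hq0
    subst this
    exact (derived_master htrans hx0 p).2 hq

lemma memx_root {x : Wt lt L f} {p : P} (hx : x ∈ XP lt L f p) :
    ∃ a : P × ℕ, x.1 0 = OnePoint.some [a] ∧ (a.1 = p ∨ lt a.1 p) ∧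
      ((a : P × ℕ).2 < (f a.1 : ℕ) ∨ a.1 ∉ L) := by
  rcases oa_cases (x.1 0) with he | ⟨l, hl⟩
  · exact absurd he x.2.2
  obtain ⟨hval, hlen⟩ := valid_of_some hl
  obtain ⟨a, rfl⟩ := List.length_eq_one_iff.1 hlen
  have hlab : labO (OnePoint.some [a]) = Option.some a.1 := by simp
  have hhead := hval.2.2 a (by simp)
  rcases memx_above hl hlab hx with ⟨_, rfl⟩ | hlt
  · exact ⟨a, hl, Or.inl rfl, hhead⟩
  · exact ⟨a, hl, Or.inr hlt, hhead⟩

lemma isCompact_closure_XP (hL : ∀ p ∈ L, ∀ q, lt q p → q ∈ L) {p : P} (hp : p ∈ L) :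
    IsCompact (closure (XP lt L f p)) := by
  classical
  set M := Finset.univ.sup (fun q : P => (f q : ℕ)) with hM
  have hTfin : ({a : P × ℕ | (a.1 = p ∨ lt a.1 p) ∧ a.2 < (f a.1 : ℕ)}).Finite := by
    refine Set.Finite.subset ((Set.finite_univ (α := P)).prod (Set.finite_Iio M)) ?_
    rintro a ⟨-, ha2⟩
    exact ⟨trivial, lt_of_lt_of_le ha2 (Finset.le_sup (f := fun q : P => (f q : ℕ)) (Finset.mem_univ a.1))⟩
  have hK : IsCompact (⋃ a ∈ {a : P × ℕ | (a.1 = p ∨ lt a.1 p) ∧ a.2 < (f a.1 : ℕ)},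
      EkW lt L f 0 [a]) :=
    hTfin.isCompact_biUnion (fun a _ => isCompact_EkW 0 [a])
  have hsub : XP lt L f p ⊆ ⋃ a ∈ {a : P × ℕ | (a.1 = p ∨ lt a.1 p) ∧ a.2 < (f a.1 : ℕ)},
      EkW lt L f 0 [a] := by
    intro x hx
    obtain ⟨a, ha0, hap, hhead⟩ := memx_root hx
    have haL : a.1 ∈ L := by
      rcases hap with rfl | hlt
      · exact hp
      · exact hL p hp a.1 hlt
    have ha2 : a.2 < (f a.1 : ℕ) := by
      rcases hhead with h | h
      · exact h
      · exact absurd haL h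
    exact Set.mem_biUnion ⟨hap, ha2⟩ ha0
  exact hK.of_isClosed_subset isClosed_closure
    (closure_minimal hsub hK.isClosed)

lemma not_isCompact_closure_XP {p : P} (hp : p ∉ L) :
    ¬ IsCompact (closure (XP lt L f p)) := by
  intro hc
  have hcover : closure (XP lt L f p) ⊆ ⋃ a : P × ℕ, EkW lt L f 0 [a] := by
    intro y _
    rcases oa_cases (y.1 0) with he | ⟨l, hl⟩
    · exact absurd he y.2.2
    obtain ⟨a, rfl⟩ := List.length_eq_one_iff.1 (valid_of_some hl).2
    exact Set.mem_iUnion.2 ⟨a, hl⟩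
  obtain ⟨t, ht⟩ := hc.elim_finite_subcover _ (fun a : P × ℕ => isOpen_EkW 0 [a]) hcover
  have hroots : ∀ n : ℕ, ((p, n) : P × ℕ) ∈ t := by
    intro n
    have hx : rootW (lt := lt) (L := L) (f := f) p n (Or.inr hp) ∈ XP lt L f p := rootF_memx p n
    have := ht (subset_closure hx)
    obtain ⟨a, ha, hmem⟩ := Set.mem_iUnion₂.1 this
    have h2 : OnePoint.some [(p, n)] = OnePoint.some [a] := hmem
    have h3 : [(p, n)] = [a] := (OnePoint.some_eq_iff _ _).1 h2
    have haeq : a = (p, n) := by simpa using h3.symm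
    rwa [← haeq]
  have hinf : (↑t : Set (P × ℕ)).Infinite := by
    refine Set.Infinite.mono ?_ (Set.infinite_range_of_injective
      (f := fun n : ℕ => ((p, n) : P × ℕ)) (fun a b hab => by simpa using hab))
    rintro _ ⟨n, rfl⟩
    exact hroots n
  exact hinf t.finite_toSet

lemma ncard_XP (hL : ∀ p ∈ L, ∀ q, lt q p → q ∈ L) {p : P} (hp : p ∈ L)
    (hmin : ∀ q ∈ L, lt q p → q = p) (hnd : ¬ lt p p) :
    (XP lt L f p).ncard = f p := by
  classical
  have hfp : 0 < (f p : ℕ) := (f p).2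
  set F : ℕ → Wt lt L f := fun i => rootW p (min i ((f p : ℕ) - 1)) (Or.inl (by omega)) with hF
  have hFval : ∀ i < (f p : ℕ), (F i).1 = rootF p i := by
    intro i hi
    have : min i ((f p : ℕ) - 1) = i := by omega
    simp only [hF, rootW, this]
  have himg : XP lt L f p = F '' (Set.Iio (f p : ℕ)) := by
    ext x
    constructor
    · intro hx
      rcases hx with ⟨k, hk1, hk2⟩ | ⟨hinf, hstab⟩
      swap
      · exact absurd (memx_infinite_lt_self x.2.1 (Or.inr ⟨hinf, hstab⟩) hinf) hnd
      obtain ⟨l, a, hl, ha, hap⟩ := labO_elim hk2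
      -- first show k = 0
      have hk0 : k = 0 := by
        by_contra hk0
        obtain ⟨a₀, ha₀, hrel, _⟩ := memx_root (Or.inl ⟨k, hk1, hk2⟩ : MemX x.1 p)
        have hpre : [a₀] <+: l := by
          have h1 : x.1 0 = OnePoint.some (List.dropLast^[k - 0] l) :=
            cond_some_down x.2.1 hl (Nat.zero_le k)
          rw [ha₀] at h1
          have : [a₀] = List.dropLast^[k] l := by
            simpa using (OnePoint.some_eq_iff _ _).1 h1
          rw [this]
          exact dropLast_iterate_prefix l k
        have hlen : ([a₀] : List (P × ℕ)).length < l.length := by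
          have := (valid_of_some hl).2
          simp only [List.length_singleton]
          omega
        have hltp : lt a₀.1 p := by
          have := rel_last_of_prefix (valid_of_some hl).1.2.1 hpre hlen
            (show ([a₀] : List (P × ℕ)).getLast? = Option.some a₀ by simp) ha
          rw [← hap]; exact this
        have : a₀.1 = p := hmin a₀.1 (hL p hp a₀.1 hltp) hltp
        rw [this] at hltp
        exact hnd hltp
      subst hk0
      obtain ⟨b, rfl⟩ := List.length_eq_one_iff.1 (valid_of_some hl).2
      have hab : a = b := by
        simp only [List.getLast?_singleton] at ha
        exact (Option.some_inj.1 ha).symm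
      subst hab
      have hb1 : a.1 = p := hap
      have hhead := (valid_of_some hl).1.2.2 a (by simp)
      have ha2 : a.2 < (f p : ℕ) := by
        rcases hhead with h | h
        · rwa [hb1] at h
        · rw [hb1] at h; exact absurd hp h
      refine ⟨a.2, ha2, ?_⟩
      refine eq_of_fin (x := F a.2) (y := x) (r := [a]) ?_ hl ?_ hk1
      · rw [hFval a.2 ha2]
        show OnePoint.some [(p, a.2)] = OnePoint.some [a]
        rw [← hb1]
      · rw [hFval a.2 ha2]
        rfl
    · rintro ⟨i, hi, rfl⟩
      show MemX (F i).1 p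
      rw [hFval i hi]
      exact rootF_memx p i
  rw [himg, Set.ncard_image_of_injOn, ← Finset.coe_range, Set.ncard_coe_finset,
    Finset.card_range]
  intro i hi j hj hij
  have h1 := congrArg (fun z : Wt lt L f => z.1 0) hij
  rw [hFval i hi, hFval j hj] at h1
  have h2 : OnePoint.some [(p, i)] = OnePoint.some [(p, j)] := h1
  have := (OnePoint.some_eq_iff _ _).1 h2
  simpa using this

end Basic

end EppAux

open EppAux in
/-- For every finite extended PO system `[P, L, f]` — `P` a finite PO system, `L` a
lower subset, `f : L_min ∩ P^d → ℕ₊` — there is a second countable Stone space `X`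
admitting a complete `[P, L, f]`-partition: a complete `P`-partition `{X_p}` with
`closure X_p` compact iff `p ∈ L`, and `|X_p| = f p` for `p ∈ L_min ∩ P^d`. -/
theorem exists_complete_extended_partition
    {P : Type*} [Fintype P] (lt : P → P → Prop)
    (htrans : ∀ a b c, lt a b → lt b c → lt a c)
    (hanti : ∀ a b, lt a b → lt b a → a = b)
    (L : Set P) (hL : ∀ p ∈ L, ∀ q, lt q p → q ∈ L)
    (f : P → ℕ+) :
    ∃ (W : TopPkg) (Xp : P → Set W.carrier),
      LocallyCompactSpace W.carrier ∧ T2Space W.carrier ∧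
      TotallyDisconnectedSpace W.carrier ∧ SecondCountableTopology W.carrier ∧
      (∀ p, (Xp p).Nonempty) ∧
      Pairwise (Function.onFun Disjoint Xp) ∧
      (⋃ p, Xp p) = Set.univ ∧
      (∀ p, derivedSet (Xp p) = ⋃ q ∈ {q | lt q p}, Xp q) ∧
      (∀ p, IsCompact (closure (Xp p)) ↔ p ∈ L) ∧
      (∀ p, p ∈ L → (∀ q ∈ L, lt q p → q = p) → ¬ lt p p →
        (Xp p).ncard = f p) := by
  classical
  set n := Fintype.card P with hn
  let e : P ≃ Fin n := Fintype.equivFin P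
  let lt' : Fin n → Fin n → Prop := fun a b => lt (e.symm a) (e.symm b)
  let L' : Set (Fin n) := {a | e.symm a ∈ L}
  let f' : Fin n → ℕ+ := fun a => f (e.symm a)
  have htrans' : ∀ a b c, lt' a b → lt' b c → lt' a c := fun a b c h1 h2 =>
    htrans _ _ _ h1 h2
  have hanti' : ∀ a b, lt' a b → lt' b a → a = b := fun a b h1 h2 =>
    e.symm.injective (hanti _ _ h1 h2)
  have hL' : ∀ p ∈ L', ∀ q, lt' q p → q ∈ L' := fun p hp q hq => hL _ hp _ hq
  have hlt'e : ∀ p q : P, lt' (e p) (e q) ↔ lt p q := by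
    intro p q
    simp only [lt', Equiv.symm_apply_apply]
  have hL'e : ∀ p : P, e p ∈ L' ↔ p ∈ L := by
    intro p
    simp only [L', Set.mem_setOf_eq, Equiv.symm_apply_apply]
  haveI i0 : SecondCountableTopology (OA (Fin n)) := secOnePoint _
  haveI i1 : SecondCountableTopology (ℕ → OA (Fin n)) := by infer_instance
  haveI i2 : SecondCountableTopology (Wt lt' L' f') := by
    exact TopologicalSpace.Subtype.secondCountableTopology _
  refine ⟨⟨Wt lt' L' f'⟩, fun p => XP lt' L' f' (e p), locallyCompactW, inferInstance,
    inferInstance, i2, fun p => XP_nonempty (e p), ?_, ?_, ?_, ?_, ?_⟩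
  · -- pairwise disjoint
    intro p q hpq
    exact XP_disjoint (fun h => hpq (e.injective h))
  · -- union is everything
    refine Set.eq_univ_of_forall fun x => ?_
    have := XP_union (lt := lt') (L := L') (f := f') htrans' hanti'
    have hx : x ∈ ⋃ p', XP lt' L' f' p' := this ▸ Set.mem_univ x
    obtain ⟨p', hp'⟩ := Set.mem_iUnion.1 hx
    refine Set.mem_iUnion.2 ⟨e.symm p', ?_⟩
    rwa [Equiv.apply_symm_apply]
  · -- derived sets
    intro p
    rw [derivedSet_XP htrans' hanti' (e p)]
    ext x
    simp only [Set.mem_iUnion, Set.mem_setOf_eq, exists_prop]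
    constructor
    · rintro ⟨q', h1, h2⟩
      refine ⟨e.symm q', ?_, ?_⟩
      · have : lt (e.symm q') (e.symm (e p)) := h1
        rwa [Equiv.symm_apply_apply] at this
      · rwa [Equiv.apply_symm_apply]
    · rintro ⟨q, h1, h2⟩
      exact ⟨e q, (hlt'e q p).2 h1, h2⟩
  · -- compact closures
    intro p
    by_cases hp : p ∈ L
    · exact iff_of_true (isCompact_closure_XP hL' ((hL'e p).2 hp)) hp
    · exact iff_of_false (not_isCompact_closure_XP (fun hc => hp ((hL'e p).1 hc))) hp
  · -- cardinality
    intro p hp hmin hnd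
    have hmin' : ∀ q' ∈ L', lt' q' (e p) → q' = e p := by
      intro q' hq' hlt
      have h1 : lt (e.symm q') p := by
        have : lt (e.symm q') (e.symm (e p)) := hlt
        rwa [Equiv.symm_apply_apply] at this
      have h2 : e.symm q' = p := hmin (e.symm q') hq' h1
      have := congrArg e h2
      rwa [Equiv.apply_symm_apply] at this
    have hnd' : ¬ lt' (e p) (e p) := fun hc => hnd ((hlt'e p p).1 hc)
    have := ncard_XP (f := f') hL' ((hL'e p).2 hp) hmin' hnd'
    rw [this]
    simp only [f', Equiv.symm_apply_apply]
end
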